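/- arXiv:1501.00624 — 7 statements merged into one kernel-verified Lean document; each statement's English description precedes it below -/
import Mathlib

section
/- For every ε with 0 < ε < 1/4 and every noiseless alternating binary protocol π of length n, there exists a deterministic interactive protocol Π with noiseless feedback over a 3-symbol alphabet, with a fixed order of speaking, of length N ≤ c·n/ε for an absolute constant c > 0, such that for every input pair (x,y) and every noise pattern with at most (1/4 − ε)·N corrupted rounds, both parties output the transcript π(x,y). -/
/-- A noiseless alternating binary protocol: Alice sends a bit in each odd round
(i.e., when the number of previously communicated bits is even) and Bob in each even
round, the bit being a fixed function of the sender's input and the past bits. -/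
structure AltProtocol (X Y : Type) where
  nextA : X → List Bool → Bool
  nextB : Y → List Bool → Bool

/-- The transcript of the first `n` rounds of the noiseless protocol on inputs `x, y`. -/
def AltProtocol.transcript {X Y : Type} (pr : AltProtocol X Y) (x : X) (y : Y) :
    ℕ → List Bool
  | 0 => []
  | n+1 =>
    let T := pr.transcript x y n
    T ++ [if T.length % 2 = 0 then pr.nextA x T else pr.nextB y T]

/-- A deterministic interactive protocol with noiseless feedback, of length `N` over
alphabet `Γ`: a speaker function on strings of received symbols (`true` = Alice),
next-symbol functions for each party (input and received symbols so far), and output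
functions for each party (input and the full sequence of received symbols). -/
structure FeedbackProtocol (Γ X Y O : Type) (N : ℕ) where
  ord : List Γ → Bool
  nextA : X → List Γ → Γ
  nextB : Y → List Γ → Γ
  outA : X → List Γ → O
  outB : Y → List Γ → O

/-- The symbol sent in round `i` of the execution with noise pattern `r`
(the received symbols): the speaker of round `i` is `ord` applied to the received
symbols so far, and it sends according to its next-symbol function. -/
def FeedbackProtocol.sent {Γ X Y O : Type} {N : ℕ} (P : FeedbackProtocol Γ X Y O N)
    (x : X) (y : Y) (r : Fin N → Γ) (i : Fin N) : Γ :=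
  let h := (List.ofFn r).take i.val
  if P.ord h then P.nextA x h else P.nextB y h

/-- The number of corrupted rounds: rounds where the sent symbol differs from the
received one. -/
def FeedbackProtocol.corruptions {Γ X Y O : Type} [DecidableEq Γ] {N : ℕ}
    (P : FeedbackProtocol Γ X Y O N) (x : X) (y : Y) (r : Fin N → Γ) : ℕ :=
  (Finset.univ.filter fun i : Fin N => P.sent x y r i ≠ r i).card

/-- The protocol has a fixed order of speaking if the speaker depends only on the
round number. -/
def FeedbackProtocol.FixedOrder {Γ X Y O : Type} {N : ℕ}
    (P : FeedbackProtocol Γ X Y O N) : Prop :=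
  ∀ h h' : List Γ, h.length = h'.length → P.ord h = P.ord h'



namespace FFO
set_option maxHeartbeats 1000000
variable {X Y : Type}

/-- the k-th bit of the (infinite) true transcript -/
def tbit (pr : AltProtocol X Y) (x : X) (y : Y) (k : ℕ) : Bool :=
  if k % 2 = 0 then pr.nextA x (pr.transcript x y k) else pr.nextB y (pr.transcript x y k)

lemma transcript_length (pr : AltProtocol X Y) (x : X) (y : Y) :
    ∀ k, (pr.transcript x y k).length = k := by
  intro k
  induction k with
  | zero => rfl
  | succ k ih => simp [AltProtocol.transcript, ih]

lemma transcript_succ (pr : AltProtocol X Y) (x : X) (y : Y) (k : ℕ) :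
    pr.transcript x y (k+1) = pr.transcript x y k ++ [tbit pr x y k] := by
  simp only [AltProtocol.transcript, tbit, transcript_length]

lemma transcript_take (pr : AltProtocol X Y) (x : X) (y : Y) {k m : ℕ} (h : k ≤ m) :
    (pr.transcript x y m).take k = pr.transcript x y k := by
  induction m with
  | zero => simp at h; subst h; rfl
  | succ m ih =>
    rcases Nat.lt_or_ge k (m+1) with h'|h'
    · rw [transcript_succ, List.take_append_of_le_length, ih (by omega)]
      rw [transcript_length]; omega
    · have : k = m + 1 := by omega
      subst this
      rw [List.take_of_length_le (by rw [transcript_length])]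

lemma transcript_getD (pr : AltProtocol X Y) (x : X) (y : Y) {k m : ℕ} (h : k < m) :
    (pr.transcript x y m).getD k false = tbit pr x y k := by
  have h1 : (pr.transcript x y m).take (k+1) = pr.transcript x y k ++ [tbit pr x y k] := by
    rw [transcript_take pr x y (by omega), transcript_succ]
  have h2 : (pr.transcript x y m).getD k false = ((pr.transcript x y m).take (k+1)).getD k false := by
    simp [List.getD_eq_getElem?_getD, List.getElem?_take, Nat.lt_succ_self]
  rw [h2, h1]
  have h3 : (pr.transcript x y k).length = k := transcript_length pr x y k
  simp [List.getD_eq_getElem?_getD, List.getElem?_append_right, h3]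


variable (pr : AltProtocol X Y) (x : X) (y : Y)

/-- length of the longest prefix of σ agreeing with the true transcript -/
def gval (σ : List Bool) : ℕ :=
  Nat.findGreatest (fun k => σ.take k = pr.transcript x y k) σ.length

lemma gval_le (σ : List Bool) : gval pr x y σ ≤ σ.length := Nat.findGreatest_le _

lemma gval_spec (σ : List Bool) :
    σ.take (gval pr x y σ) = pr.transcript x y (gval pr x y σ) :=
  Nat.findGreatest_spec (P := fun k => σ.take k = pr.transcript x y k)
    (Nat.zero_le _) (by rfl)

lemma gval_ge (σ : List Bool) {k : ℕ} (hk : k ≤ σ.length)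
    (h : σ.take k = pr.transcript x y k) : k ≤ gval pr x y σ :=
  Nat.le_findGreatest hk h

lemma gval_down (σ : List Bool) {k : ℕ} (hk : k ≤ gval pr x y σ) :
    σ.take k = pr.transcript x y k := by
  have h1 : σ.take k = (σ.take (gval pr x y σ)).take k := by
    rw [List.take_take, min_eq_left hk]
  rw [h1, gval_spec, transcript_take pr x y hk]

lemma gval_not (σ : List Bool) {k : ℕ} (h1 : gval pr x y σ < k) (h2 : k ≤ σ.length) :
    ¬ σ.take k = pr.transcript x y k :=
  Nat.findGreatest_is_greatest h1 h2

lemma gval_full (σ : List Bool) (h : gval pr x y σ = σ.length) :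
    σ = pr.transcript x y σ.length := by
  have := gval_spec pr x y σ
  rwa [h, List.take_length] at this

/-- the first wrong symbol -/
lemma gval_wrong (σ : List Bool) (h : gval pr x y σ < σ.length) :
    σ.getD (gval pr x y σ) false ≠ tbit pr x y (gval pr x y σ) := by
  intro hc
  set g := gval pr x y σ with hg
  have h1 : σ.take (g+1) = pr.transcript x y (g+1) := by
    rw [List.take_succ, transcript_succ pr x y _, ← gval_spec pr x y σ, ← hg]
    congr 1
    have : σ[g]? = some (σ.getD g false) := by
      rw [List.getD_eq_getElem?_getD, List.getElem?_eq_getElem h]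
      simp [List.getElem?_eq_getElem h]
    rw [this, hc]; rfl
  exact gval_not pr x y σ (by omega) (by omega) h1

/-- push lemmas -/
lemma gval_push_ge (σ : List Bool) (v : Bool) :
    gval pr x y σ ≤ gval pr x y (σ ++ [v]) := by
  apply gval_ge
  · simp; have := gval_le pr x y σ; omega
  · rw [List.take_append_of_le_length (gval_le pr x y σ), gval_spec]

lemma gval_push_correct (σ : List Bool) (h : gval pr x y σ = σ.length) :
    gval pr x y (σ ++ [tbit pr x y σ.length]) = σ.length + 1 := by
  have hub := gval_le pr x y (σ ++ [tbit pr x y σ.length])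
  simp only [List.length_append, List.length_singleton] at hub
  have hlb : σ.length + 1 ≤ gval pr x y (σ ++ [tbit pr x y σ.length]) := by
    apply gval_ge
    · simp
    · rw [List.take_of_length_le (by simp), transcript_succ pr x y _, ← gval_full pr x y σ h]
  omega

lemma gval_push_junk (σ : List Bool) (v : Bool)
    (h : gval pr x y σ < σ.length ∨ v ≠ tbit pr x y σ.length) :
    gval pr x y (σ ++ [v]) = gval pr x y σ := by
  refine le_antisymm ?_ (gval_push_ge pr x y σ v)
  by_contra hc
  push_neg at hc
  set g := gval pr x y σ with hg
  have h1 : (σ ++ [v]).take (g+1) = pr.transcript x y (g+1) :=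
    gval_down pr x y _ hc
  rcases h with h|h
  · have h2 : (σ ++ [v]).take (g+1) = σ.take (g+1) :=
      List.take_append_of_le_length (by omega)
    rw [h2] at h1
    exact gval_not pr x y σ (k := g+1) (by omega) (by omega) h1
  · rcases Nat.lt_or_ge g σ.length with h'|h'
    · have h2 : (σ ++ [v]).take (g+1) = σ.take (g+1) :=
        List.take_append_of_le_length (by omega)
      rw [h2] at h1
      exact gval_not pr x y σ (k := g+1) (by omega) (by omega) h1
    · have hgl : g = σ.length := le_antisymm (gval_le pr x y σ) h'
      have h3 : (σ ++ [v]).take (g+1) = σ ++ [v] := by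
        apply List.take_of_length_le; simp [hgl]
      rw [h3, transcript_succ pr x y _] at h1
      have h4 : pr.transcript x y g = σ := by
        have h5 := gval_spec pr x y σ
        rw [← hg] at h5
        rw [hgl] at h5 ⊢
        rw [← h5, List.take_length]
      rw [h4] at h1
      have h6 := List.append_inj_right h1 rfl
      simp only [List.cons.injEq] at h6
      exact h (by rw [← hgl]; exact h6.1)

/-- pop lemma -/
lemma gval_pop (σ : List Bool) (t : ℕ) :
    gval pr x y (σ.take t) = min (gval pr x y σ) t := by
  have hlen : (σ.take t).length = min t σ.length := List.length_take
  set g := gval pr x y σ with hg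
  refine le_antisymm ?_ ?_
  · -- upper bound
    have hub : gval pr x y (σ.take t) ≤ min t σ.length := hlen ▸ gval_le pr x y (σ.take t)
    rcases Nat.lt_or_ge (min g t) (gval pr x y (σ.take t)) with h|h
    · exfalso
      have h1 : (σ.take t).take (min g t + 1) = pr.transcript x y (min g t + 1) :=
        gval_down pr x y _ h
      have hgt : g < min g t + 1 := by omega
      have h2 : (σ.take t).take (min g t + 1) = σ.take (min g t + 1) := by
        rw [List.take_take]
        congr 1
        omega
      rw [h2] at h1
      exact gval_not pr x y σ (by omega) (by omega) h1
    · exact h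
  · -- lower bound
    apply gval_ge
    · rw [hlen]; have := gval_le pr x y σ; omega
    · rw [List.take_take]
      have : min (min g t) t = min g t := by omega
      rw [this]
      exact gval_down pr x y σ (by omega)


def Wf (g m : ℕ) (c sp : Bool) : ℤ :=
  if g = m then
    (if c then (if decide (m % 2 = 0) = sp then 2 else 1)
     else (if decide (m % 2 = 0) = sp then 0 else 1))
  else if (m - g) % 2 = 0 then (if decide (g % 2 = 0) = sp then 0 else 1)
  else (if decide (g % 2 = 0) = sp then 3 else if c then 4 else 2)

lemma Wf_spec (g m : ℕ) (c sp : Bool) (cn spn : ℕ)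
    (hc : cn = if c then 1 else 0) (hsp : spn = if sp then 0 else 1) :
    (g = m ∧ cn = 1 ∧ m % 2 = spn ∧ Wf g m c sp = 2) ∨
    (g = m ∧ cn = 1 ∧ m % 2 ≠ spn ∧ Wf g m c sp = 1) ∨
    (g = m ∧ cn = 0 ∧ m % 2 = spn ∧ Wf g m c sp = 0) ∨
    (g = m ∧ cn = 0 ∧ m % 2 ≠ spn ∧ Wf g m c sp = 1) ∨
    (g ≠ m ∧ (m - g) % 2 = 0 ∧ g % 2 = spn ∧ Wf g m c sp = 0) ∨
    (g ≠ m ∧ (m - g) % 2 = 0 ∧ g % 2 ≠ spn ∧ Wf g m c sp = 1) ∨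
    (g ≠ m ∧ (m - g) % 2 = 1 ∧ g % 2 = spn ∧ Wf g m c sp = 3) ∨
    (g ≠ m ∧ (m - g) % 2 = 1 ∧ g % 2 ≠ spn ∧ cn = 1 ∧ Wf g m c sp = 4) ∨
    (g ≠ m ∧ (m - g) % 2 = 1 ∧ g % 2 ≠ spn ∧ cn = 0 ∧ Wf g m c sp = 2) := by
  subst hc hsp
  have hm2 : m % 2 = 0 ∨ m % 2 = 1 := Nat.mod_two_eq_zero_or_one m
  have hg2 : g % 2 = 0 ∨ g % 2 = 1 := Nat.mod_two_eq_zero_or_one g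
  have hmg2 : (m - g) % 2 = 0 ∨ (m - g) % 2 = 1 := Nat.mod_two_eq_zero_or_one (m - g)
  cases c <;> cases sp <;> unfold Wf <;> split_ifs <;> simp_all <;> omega

lemma Wf_nonneg (g m : ℕ) (c sp : Bool) : 0 ≤ Wf g m c sp := by
  unfold Wf; split_ifs <;> omega

lemma key_rob (g m g' m' : ℕ) (c sp c' : Bool) (hg : g ≤ m) (hg' : g' ≤ m')
    (h : (c' = true ∧ m' = m - 2 ∧ g' = min g m') ∨
         (c' = false ∧ m' = m ∧ g' = g) ∨
         (c' = false ∧ m' = m + 1 ∧ (g' = g ∨ (g = m ∧ g' = m + 1)))) :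
    2*(g':ℤ) - m' - Wf g' m' c' (!sp) ≥ 2*(g:ℤ) - m - Wf g m c sp - 3 := by
  have h1 := Wf_spec g m c sp (if c then 1 else 0) (if sp then 0 else 1) rfl rfl
  have h2 := Wf_spec g' m' c' (!sp) (if c' then 1 else 0) (if !sp then 0 else 1) rfl rfl
  cases sp <;> cases c <;> cases c' <;>
    simp only [Bool.not_true, Bool.not_false, Bool.false_eq_true, Bool.true_eq_false,
      reduceIte, decide_eq_true_eq, decide_eq_false_iff_not, ne_eq,
      false_and, true_and, false_or, or_false, and_true, true_or, not_true, not_false_iff,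
      true_implies, false_implies, not_false_eq_true, not_true_eq_false] at h1 h2 h ⊢ <;>
    omega

lemma key_hon (g m g' m' : ℕ) (c sp c' : Bool) (hg : g ≤ m) (hg' : g' ≤ m')
    (h : (c' = true ∧ g < m ∧ m' = m - 2 ∧ g' = min g m') ∨
         (c' = false ∧ m' = m ∧ g' = g ∧ (c = true ∨ decide (m % 2 = 0) ≠ sp) ∧
            (g < m → decide (g % 2 = 0) ≠ sp)) ∨
         (c' = false ∧ c = false ∧ decide (m % 2 = 0) = sp ∧ m' = m + 1 ∧
            ((g = m ∧ g' = m + 1) ∨ (g < m ∧ g' = g ∧ decide (g % 2 = 0) ≠ sp)))) :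
    2*(g':ℤ) - m' - Wf g' m' c' (!sp) ≥ 2*(g:ℤ) - m - Wf g m c sp + 1 := by
  have h1 := Wf_spec g m c sp (if c then 1 else 0) (if sp then 0 else 1) rfl rfl
  have h2 := Wf_spec g' m' c' (!sp) (if c' then 1 else 0) (if !sp then 0 else 1) rfl rfl
  cases sp <;> cases c <;> cases c' <;>
    simp only [Bool.not_true, Bool.not_false, Bool.false_eq_true, Bool.true_eq_false,
      reduceIte, decide_eq_true_eq, decide_eq_false_iff_not, ne_eq,
      false_and, true_and, false_or, or_false, and_true, true_or, not_true, not_false_iff,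
      true_implies, false_implies, not_false_eq_true, not_true_eq_false] at h1 h2 h ⊢ <;>
    omega


def consA (x : X) (σ : List Bool) : Prop :=
  ∀ k, k < σ.length → k % 2 = 0 → σ.getD k false = pr.nextA x (σ.take k)

def consB (y : Y) (σ : List Bool) : Prop :=
  ∀ k, k < σ.length → k % 2 = 1 → σ.getD k false = pr.nextB y (σ.take k)

lemma consA_good (x : X) (y : Y) (σ : List Bool)
    (h : σ = pr.transcript x y σ.length) : consA pr x σ := by
  intro k hk hk2
  have h1 : σ.getD k false = tbit pr x y k := by
    conv_lhs => rw [h]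
    exact transcript_getD pr x y hk
  have h2 : σ.take k = pr.transcript x y k := by
    conv_lhs => rw [h]
    exact transcript_take pr x y hk.le
  rw [h1, h2, tbit, if_pos hk2]

lemma consB_good (x : X) (y : Y) (σ : List Bool)
    (h : σ = pr.transcript x y σ.length) : consB pr y σ := by
  intro k hk hk2
  have h1 : σ.getD k false = tbit pr x y k := by
    conv_lhs => rw [h]
    exact transcript_getD pr x y hk
  have h2 : σ.take k = pr.transcript x y k := by
    conv_lhs => rw [h]
    exact transcript_take pr x y hk.le
  rw [h1, h2, tbit, if_neg (by omega)]

lemma consA_bad (x : X) (y : Y) (σ : List Bool)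
    (hlt : gval pr x y σ < σ.length) (hpar : gval pr x y σ % 2 = 0) :
    ¬ consA pr x σ := by
  intro hc
  have h1 := hc (gval pr x y σ) hlt hpar
  rw [gval_spec pr x y σ] at h1
  have h2 : tbit pr x y (gval pr x y σ) = pr.nextA x (pr.transcript x y (gval pr x y σ)) := by
    rw [tbit, if_pos hpar]
  exact gval_wrong pr x y σ hlt (h1.trans h2.symm)

lemma consB_bad (x : X) (y : Y) (σ : List Bool)
    (hlt : gval pr x y σ < σ.length) (hpar : gval pr x y σ % 2 = 1) :
    ¬ consB pr y σ := by
  intro hc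
  have h1 := hc (gval pr x y σ) hlt hpar
  rw [gval_spec pr x y σ] at h1
  have h2 : tbit pr x y (gval pr x y σ) = pr.nextB y (pr.transcript x y (gval pr x y σ)) := by
    rw [tbit, if_neg (by omega)]
  exact gval_wrong pr x y σ hlt (h1.trans h2.symm)

open Classical in
noncomputable def actA (x : X) (σ : List Bool) (c : Bool) : Fin 3 :=
  if consA pr x σ then
    (if c then 0 else if σ.length % 2 = 0 then (if pr.nextA x σ then 1 else 0) else 0)
  else 2

open Classical in
noncomputable def actB (y : Y) (σ : List Bool) (c : Bool) : Fin 3 :=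
  if consB pr y σ then
    (if c then 0 else if σ.length % 2 = 0 then 0 else (if pr.nextB y σ then 1 else 0))
  else 2

def stepf (sp c : Bool) (σ : List Bool) (s : Fin 3) : List Bool :=
  if s = 2 then σ.take (σ.length - 2)
  else if c then σ
  else if decide (σ.length % 2 = 0) = sp then σ ++ [decide (s = 1)] else σ

def tstep (t : List Bool × Bool × Bool) (s : Fin 3) : List Bool × Bool × Bool :=
  (stepf t.2.1 t.2.2 t.1 s, !t.2.1, decide (s = 2))

def runP (h : List (Fin 3)) : List Bool × Bool × Bool :=
  h.foldl tstep ([], true, false)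

noncomputable def Psi (x : X) (y : Y) (t : List Bool × Bool × Bool) : ℤ :=
  2*(gval pr x y t.1 : ℤ) - t.1.length - Wf (gval pr x y t.1) t.1.length t.2.2 t.2.1


lemma stepf_pop (sp c : Bool) (σ : List Bool) : stepf sp c σ 2 = σ.take (σ.length - 2) := by
  simp [stepf]

lemma stepf_len_pop (σ : List Bool) :
    (σ.take (σ.length - 2)).length = σ.length - 2 := by
  rw [List.length_take]; omega

/-- robust step bound -/
lemma stepA (x : X) (y : Y) (σ : List Bool) (c sp : Bool) (s : Fin 3) :
    Psi pr x y (tstep (σ, sp, c) s) ≥ Psi pr x y (σ, sp, c) - 3 := by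
  have hgle := gval_le pr x y σ
  unfold Psi tstep
  simp only
  apply key_rob _ _ _ _ c sp _ hgle (gval_le pr x y _)
  by_cases h2 : s = 2
  · left
    subst h2
    rw [stepf_pop]
    refine ⟨by simp, ?_, ?_⟩
    · exact stepf_len_pop σ
    · rw [gval_pop, stepf_len_pop σ]
  · have hc2 : decide (s = 2) = false := by simp [h2]
    by_cases hc : c = true
    · right; left
      have hσ' : stepf sp c σ s = σ := by simp [stepf, h2, hc]
      exact ⟨hc2, by rw [hσ'], by rw [hσ']⟩
    · have hcf : c = false := by simpa using hc
      by_cases hpar : decide (σ.length % 2 = 0) = sp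
      · right; right
        have hσ' : stepf sp c σ s = σ ++ [decide (s = 1)] := by
          simp [stepf, h2, hcf, hpar]
        refine ⟨hc2, by simp [hσ'], ?_⟩
        by_cases hgm : gval pr x y σ = σ.length
        · by_cases hv : decide (s = 1) = tbit pr x y σ.length
          · right
            refine ⟨hgm, ?_⟩
            rw [hσ', hv, gval_push_correct pr x y σ hgm]
          · left
            rw [hσ', gval_push_junk pr x y σ _ (Or.inr hv)]
        · left
          rw [hσ', gval_push_junk pr x y σ _ (Or.inl (by omega))]
      · right; left
        have hσ' : stepf sp c σ s = σ := by simp [stepf, h2, hcf, hpar]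
        exact ⟨hc2, by rw [hσ'], by rw [hσ']⟩

lemma psi_hon_aux (x : X) (y : Y) (σ : List Bool) (c sp : Bool) (a : Fin 3)
    (hpop : a = 2 → gval pr x y σ < σ.length)
    (hpush : a ≠ 2 → c = false → decide (σ.length % 2 = 0) = sp →
        (gval pr x y σ = σ.length ∧ decide (a = 1) = tbit pr x y σ.length) ∨
          gval pr x y σ < σ.length)
    (hown : a ≠ 2 → gval pr x y σ < σ.length → decide (gval pr x y σ % 2 = 0) ≠ sp) :
    Psi pr x y (tstep (σ, sp, c) a) ≥ Psi pr x y (σ, sp, c) + 1 := by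
  have hgle := gval_le pr x y σ
  unfold Psi tstep
  simp only
  apply key_hon _ _ _ _ c sp _ hgle (gval_le pr x y _)
  by_cases h2 : a = 2
  · left
    subst h2
    rw [stepf_pop]
    exact ⟨by simp, hpop rfl, stepf_len_pop σ, by rw [gval_pop, stepf_len_pop σ]⟩
  · have hc2 : decide (a = 2) = false := by simp [h2]
    by_cases hc : c = true
    · right; left
      have hσ' : stepf sp c σ a = σ := by simp [stepf, h2, hc]
      exact ⟨hc2, by rw [hσ'], by rw [hσ'], Or.inl hc, hown h2⟩
    · have hcf : c = false := by simpa using hc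
      by_cases hpar : decide (σ.length % 2 = 0) = sp
      · right; right
        have hσ' : stepf sp c σ a = σ ++ [decide (a = 1)] := by
          simp [stepf, h2, hcf, hpar]
        refine ⟨hc2, hcf, hpar, by simp [hσ'], ?_⟩
        rcases hpush h2 hcf hpar with ⟨hgm, htb⟩ | hlt
        · left
          refine ⟨hgm, ?_⟩
          rw [hσ', htb, gval_push_correct pr x y σ hgm]
        · right
          refine ⟨hlt, ?_, hown h2 hlt⟩
          rw [hσ', gval_push_junk pr x y σ _ (Or.inl hlt)]
      · right; left
        have hσ' : stepf sp c σ a = σ := by simp [stepf, h2, hcf, hpar]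
        exact ⟨hc2, by rw [hσ'], by rw [hσ'], Or.inr hpar, hown h2⟩

lemma actA_ne_two (x : X) (σ : List Bool) (c : Bool) (hcons : consA pr x σ) :
    actA pr x σ c ≠ 2 := by
  rw [actA, if_pos hcons]
  split_ifs <;> simp [Fin.ext_iff]

lemma actB_ne_two (y : Y) (σ : List Bool) (c : Bool) (hcons : consB pr y σ) :
    actB pr y σ c ≠ 2 := by
  rw [actB, if_pos hcons]
  split_ifs <;> simp [Fin.ext_iff]

lemma stepB_A (x : X) (y : Y) (σ : List Bool) (c : Bool) :
    Psi pr x y (tstep (σ, true, c) (actA pr x σ c)) ≥ Psi pr x y (σ, true, c) + 1 := by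
  have hgle := gval_le pr x y σ
  by_cases hcons : consA pr x σ
  · apply psi_hon_aux
    · intro h2
      exact absurd h2 (actA_ne_two pr x σ c hcons)
    · intro _ hcf hpar
      simp only [decide_eq_true_eq] at hpar
      by_cases hgm : gval pr x y σ = σ.length
      · left
        refine ⟨hgm, ?_⟩
        have hfull := gval_full pr x y σ hgm
        have ha : actA pr x σ c = if pr.nextA x σ then 1 else 0 := by
          rw [actA, if_pos hcons, if_neg (by simp [hcf]), if_pos hpar]
        have htb : tbit pr x y σ.length = pr.nextA x σ := by
          rw [tbit, if_pos hpar, ← hfull]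
        rw [ha, htb]
        cases pr.nextA x σ <;> simp [Fin.ext_iff]
      · right; omega
    · intro _ hlt
      simp only [ne_eq, decide_eq_true_eq]
      intro hpar
      exact consA_bad pr x y σ hlt hpar hcons
  · have ha : actA pr x σ c = 2 := by rw [actA, if_neg hcons]
    apply psi_hon_aux
    · intro _
      rcases Nat.lt_or_ge (gval pr x y σ) σ.length with h|h
      · exact h
      · exact absurd (consA_good pr x y σ (gval_full pr x y σ (le_antisymm hgle h))) hcons
    · intro h2; exact absurd ha h2
    · intro h2; exact absurd ha h2

lemma stepB_B (x : X) (y : Y) (σ : List Bool) (c : Bool) :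
    Psi pr x y (tstep (σ, false, c) (actB pr y σ c)) ≥ Psi pr x y (σ, false, c) + 1 := by
  have hgle := gval_le pr x y σ
  by_cases hcons : consB pr y σ
  · apply psi_hon_aux
    · intro h2
      exact absurd h2 (actB_ne_two pr y σ c hcons)
    · intro _ hcf hpar
      simp only [decide_eq_false_iff_not] at hpar
      by_cases hgm : gval pr x y σ = σ.length
      · left
        refine ⟨hgm, ?_⟩
        have hfull := gval_full pr x y σ hgm
        have ha : actB pr y σ c = if pr.nextB y σ then 1 else 0 := by
          rw [actB, if_pos hcons, if_neg (by simp [hcf]), if_neg hpar]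
        have htb : tbit pr x y σ.length = pr.nextB y σ := by
          rw [tbit, if_neg hpar, ← hfull]
        rw [ha, htb]
        cases pr.nextB y σ <;> simp [Fin.ext_iff]
      · right; omega
    · intro _ hlt
      have h0 : gval pr x y σ % 2 = 0 := by
        rcases Nat.mod_two_eq_zero_or_one (gval pr x y σ) with h|h
        · exact h
        · exact absurd hcons (consB_bad pr x y σ hlt h)
      simp [h0]
  · have ha : actB pr y σ c = 2 := by rw [actB, if_neg hcons]
    apply psi_hon_aux
    · intro _
      rcases Nat.lt_or_ge (gval pr x y σ) σ.length with h|h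
      · exact h
      · exact absurd (consB_good pr x y σ (gval_full pr x y σ (le_antisymm hgle h))) hcons
    · intro h2; exact absurd ha h2
    · intro h2; exact absurd ha h2



lemma tstep_sp (t : List Bool × Bool × Bool) (s : Fin 3) : (tstep t s).2.1 = !t.2.1 := rfl

lemma Psi_le (x : X) (y : Y) (t : List Bool × Bool × Bool) :
    Psi pr x y t ≤ (gval pr x y t.1 : ℤ) := by
  unfold Psi
  have h1 := gval_le pr x y t.1
  have h2 := Wf_nonneg (gval pr x y t.1) t.1.length t.2.2 t.2.1
  push_cast
  omega

lemma Psi_nil (x : X) (y : Y) : Psi pr x y ([], true, false) = 0 := by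
  have h0 : gval pr x y ([] : List Bool) = 0 := rfl
  unfold Psi
  simp only [h0, List.length_nil]
  simp [Wf]


lemma runP_nil : runP [] = ([], true, false) := rfl

lemma runP_append (l : List (Fin 3)) (s : Fin 3) : runP (l ++ [s]) = tstep (runP l) s := by
  unfold runP
  rw [List.foldl_append]
  rfl


lemma runP_sp (l : List (Fin 3)) : (runP l).2.1 = decide (l.length % 2 = 0) := by
  induction l using List.reverseRecOn with
  | nil => rfl
  | append_singleton l s ih =>
    rw [runP_append, tstep_sp, ih]
    rcases Nat.mod_two_eq_zero_or_one l.length with h|h <;>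
      simp [List.length_append, Nat.add_mod, h]

noncomputable def Pro (pr : AltProtocol X Y) (n N : ℕ) :
    FeedbackProtocol (Fin 3) X Y (List Bool) N where
  ord h := decide (h.length % 2 = 0)
  nextA x h := actA pr x (runP h).1 (runP h).2.2
  nextB y h := actB pr y (runP h).1 (runP h).2.2
  outA _ h := (runP h).1.take n
  outB _ h := (runP h).1.take n

section main
variable (pr : AltProtocol X Y) (n N : ℕ) (x : X) (y : Y) (r : Fin N → Fin 3)

lemma take_ofFn_succ (i : ℕ) (hi : i < N) :
    (List.ofFn r).take (i+1) = (List.ofFn r).take i ++ [r ⟨i, hi⟩] := by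
  rw [List.take_succ]
  congr 1
  rw [List.getElem?_ofFn]
  rw [dif_pos hi]
  rfl

lemma sent_eq (i : ℕ) (hi : i < N) :
    (Pro pr n N).sent x y r ⟨i, hi⟩ =
      (if (runP ((List.ofFn r).take i)).2.1 then
        actA pr x (runP ((List.ofFn r).take i)).1 (runP ((List.ofFn r).take i)).2.2
      else actB pr y (runP ((List.ofFn r).take i)).1 (runP ((List.ofFn r).take i)).2.2) := by
  have hlen : ((List.ofFn r).take i).length = i := by
    rw [List.length_take, List.length_ofFn]; omega
  have hord : (Pro pr n N).ord ((List.ofFn r).take i) = decide (i % 2 = 0) := by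
    simp [Pro, hlen]
  have hsp : (runP ((List.ofFn r).take i)).2.1 = decide (i % 2 = 0) := by
    rw [runP_sp, hlen]
  rw [FeedbackProtocol.sent]
  simp only [hord, hsp]
  rfl

lemma psi_step (i : ℕ) (hi : i < N) :
    Psi pr x y (runP ((List.ofFn r).take (i+1))) ≥
      Psi pr x y (runP ((List.ofFn r).take i)) - 3 ∧
    ((Pro pr n N).sent x y r ⟨i, hi⟩ = r ⟨i, hi⟩ →
      Psi pr x y (runP ((List.ofFn r).take (i+1))) ≥
        Psi pr x y (runP ((List.ofFn r).take i)) + 1) := by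
  have hstep : runP ((List.ofFn r).take (i+1)) = tstep (runP ((List.ofFn r).take i)) (r ⟨i, hi⟩) := by
    rw [take_ofFn_succ N r i hi, runP_append]
  have hsent := sent_eq pr n N x y r i hi
  rcases e : runP ((List.ofFn r).take i) with ⟨σ, sp, c⟩
  rw [e] at hstep hsent
  simp only at hsent
  constructor
  · rw [hstep]
    exact stepA pr x y σ c sp _
  · intro hhon
    rw [hstep, ← hhon, hsent]
    rcases Bool.eq_false_or_eq_true sp with h|h <;> subst h
    · rw [if_pos rfl]
      exact stepB_A pr x y σ c
    · rw [if_neg (by simp)]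
      exact stepB_B pr x y σ c

lemma psi_main :
    ∀ i ≤ N, (i : ℤ) ≤ Psi pr x y (runP ((List.ofFn r).take i)) +
      4 * ((Finset.univ.filter fun j : Fin N =>
        j.val < i ∧ (Pro pr n N).sent x y r j ≠ r j).card : ℤ) := by
  intro i
  induction i with
  | zero =>
    intro _
    simp only [List.take_zero, runP_nil, Psi_nil, Nat.cast_zero]
    positivity
  | succ i ih =>
    intro hi1
    have hi : i < N := by omega
    have ihh := ih (by omega)
    obtain ⟨hrob, hhon⟩ := psi_step pr n N x y r i hi
    have hsub : (Finset.univ.filter fun j : Fin N =>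
        j.val < i ∧ (Pro pr n N).sent x y r j ≠ r j) ⊆
        (Finset.univ.filter fun j : Fin N =>
        j.val < i + 1 ∧ (Pro pr n N).sent x y r j ≠ r j) := by
      intro j hj
      simp only [Finset.mem_filter, Finset.mem_univ, true_and] at hj ⊢
      exact ⟨by omega, hj.2⟩
    by_cases hcor : (Pro pr n N).sent x y r ⟨i, hi⟩ = r ⟨i, hi⟩
    · have h1 := hhon hcor
      have h2 := Finset.card_le_card hsub
      push_cast
      push_cast at ihh
      omega
    · have h2 : (Finset.univ.filter fun j : Fin N =>
          j.val < i ∧ (Pro pr n N).sent x y r j ≠ r j).card + 1 ≤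
          (Finset.univ.filter fun j : Fin N =>
          j.val < i + 1 ∧ (Pro pr n N).sent x y r j ≠ r j).card := by
        apply Finset.card_lt_card
        refine ⟨hsub, fun hss => ?_⟩
        have : (⟨i, hi⟩ : Fin N) ∈ (Finset.univ.filter fun j : Fin N =>
            j.val < i + 1 ∧ (Pro pr n N).sent x y r j ≠ r j) := by
          simp only [Finset.mem_filter, Finset.mem_univ, true_and]
          exact ⟨by omega, hcor⟩
        have h3 := hss this
        simp only [Finset.mem_filter, Finset.mem_univ, true_and] at h3
        omega
      push_cast
      push_cast at ihh
      omega

end main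

end FFO

set_option maxHeartbeats 1000000 in
/-- For every ε with 0 < ε < 1/4 and every noiseless alternating binary
protocol π of length n, there is a deterministic feedback protocol over a 3-symbol
alphabet with a fixed order of speaking, of length N ≤ c·n/ε for an absolute constant
c > 0, such that for every input pair and every noise pattern with at most
(1/4 − ε)·N corrupted rounds, both parties output the transcript π(x,y). -/
theorem feedback_fixed_order_large_alphabet :
    ∃ c : ℝ, 0 < c ∧
      ∀ (X Y : Type) (pr : AltProtocol X Y) (n : ℕ) (ε : ℝ),
        0 < ε → ε < 1/4 →
        ∃ (N : ℕ) (P : FeedbackProtocol (Fin 3) X Y (List Bool) N),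
          P.FixedOrder ∧ (N : ℝ) ≤ c * n / ε ∧
          ∀ (x : X) (y : Y) (r : Fin N → Fin 3),
            (P.corruptions x y r : ℝ) ≤ (1/4 - ε) * N →
            P.outA x (List.ofFn r) = pr.transcript x y n ∧
            P.outB y (List.ofFn r) = pr.transcript x y n := by
  refine ⟨1, one_pos, ?_⟩
  intro X Y pr n ε hε hε4
  set N := ⌈(n : ℝ)/(4*ε)⌉₊ with hN
  refine ⟨N, FFO.Pro pr n N, ?_, ?_, ?_⟩
  · intro h h' hlen
    simp [FFO.Pro, hlen]
  · -- length bound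
    rcases Nat.eq_zero_or_pos n with hn|hn
    · subst hn
      simp [hN]
    · have hpos : (0:ℝ) < 4*ε := by linarith
      have hc : (N:ℝ) < (n : ℝ)/(4*ε) + 1 := by
        rw [hN]; exact Nat.ceil_lt_add_one (by positivity)
      have hn1 : (1:ℝ) ≤ n := by exact_mod_cast hn
      have hq : (1:ℝ) ≤ (n : ℝ)/(4*ε) := by
        rw [le_div_iff₀ hpos]
        nlinarith
      have he : (n:ℝ)/ε = 4*((n : ℝ)/(4*ε)) := by
        field_simp
      rw [one_mul]
      rw [he]
      linarith
  · intro x y r hcorr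
    have hceil : (n : ℝ)/(4*ε) ≤ N := by rw [hN]; exact Nat.le_ceil _
    have hlen : (List.ofFn r).length = N := List.length_ofFn
    have htake : (List.ofFn r).take N = List.ofFn r :=
      List.take_of_length_le (le_of_eq hlen)
    have hEcorr : (Finset.univ.filter fun j : Fin N =>
        j.val < N ∧ (FFO.Pro pr n N).sent x y r j ≠ r j).card =
        (FFO.Pro pr n N).corruptions x y r := by
      unfold FeedbackProtocol.corruptions
      congr 1
      apply Finset.filter_congr
      intro j _
      simp [j.isLt]
    have hmain := FFO.psi_main pr n N x y r N le_rfl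
    rw [hEcorr, htake] at hmain
    set corr := (FFO.Pro pr n N).corruptions x y r with hcorrdef
    -- numeric: n + 4*corr ≤ N
    have hreal : (n : ℝ) + 4*corr ≤ N := by
      have hpos : (0:ℝ) < 4*ε := by linarith
      have h1 : (n : ℝ) ≤ (N:ℝ)*(4*ε) := (div_le_iff₀ hpos).1 hceil
      have h2 : (corr : ℝ) ≤ (1/4 - ε)*N := hcorr
      nlinarith
    have hnat : n + 4*corr ≤ N := by exact_mod_cast hreal
    have hpsile := FFO.Psi_le pr x y (FFO.runP (List.ofFn r))
    have hgval : n ≤ FFO.gval pr x y (FFO.runP (List.ofFn r)).1 := by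
      have : (n : ℤ) ≤ FFO.gval pr x y (FFO.runP (List.ofFn r)).1 := by
        push_cast at hmain ⊢
        omega
      exact_mod_cast this
    have hfinal : (FFO.runP (List.ofFn r)).1.take n = pr.transcript x y n :=
      FFO.gval_down pr x y _ hgval
    exact ⟨hfinal, hfinal⟩
end

section
/- For every finite alphabet Σ and every deterministic interactive protocol with noiseless feedback of length N over Σ, with a fixed order of speaking, in which Alice holds x ∈ {0,1}, Bob holds y ∈ {0,1}, and both parties are required to output the pair (x,y): there exist an input pair (x,y) and a noise pattern with at most ⌈N/4⌉ corrupted rounds under which some party's output differs from (x,y). -/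
namespace FeedbackAux

/-- Build a received-string prefix list recursively from a step function. -/
def buildT {Γ : Type} (step : ℕ → List Γ → Γ) : ℕ → List Γ
  | 0 => []
  | i+1 => buildT step i ++ [step i (buildT step i)]

lemma buildT_length {Γ : Type} (step : ℕ → List Γ → Γ) (i : ℕ) :
    (buildT step i).length = i := by
  induction i with
  | zero => rfl
  | succ n ih => simp [buildT, ih]

lemma buildT_prefix {Γ : Type} (step : ℕ → List Γ → Γ) {i n : ℕ} (h : i ≤ n) :
    buildT step i <+: buildT step n := by
  induction n with
  | zero => interval_cases i; exact List.prefix_rfl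
  | succ n ih =>
    rcases Nat.lt_or_ge i (n+1) with h' | h'
    · exact (ih (Nat.lt_succ_iff.mp h')).trans ⟨[step n (buildT step n)], rfl⟩
    · have hi : i = n+1 := le_antisymm h h'
      subst hi; exact List.prefix_rfl

lemma buildT_take {Γ : Type} (step : ℕ → List Γ → Γ) {i n : ℕ} (h : i ≤ n) :
    (buildT step n).take i = buildT step i := by
  obtain ⟨t, ht⟩ := buildT_prefix step h
  rw [← ht]
  have := List.take_left (l₁ := buildT step i) (l₂ := t)
  rwa [buildT_length] at this

lemma buildT_getElem {Γ : Type} (step : ℕ → List Γ → Γ) {i n : ℕ} (h : i < n)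
    (h' : i < (buildT step n).length) :
    (buildT step n)[i] = step i (buildT step i) := by
  have hpre := buildT_prefix step (show i + 1 ≤ n from h)
  have h4 : i < (buildT step (i+1)).length := by rw [buildT_length]; omega
  rw [← List.IsPrefix.getElem hpre h4]
  show (buildT step i ++ [step i (buildT step i)])[i]'(by simp [buildT_length]) = _
  rw [List.getElem_append_right (by simp [buildT_length])]
  simp [buildT_length]

/-- Number of `false`-rounds (Bob rounds) before round `i`. -/
def cntOf (f : ℕ → Bool) (i : ℕ) : ℕ :=
  ((Finset.range i).filter fun j => f j = false).card

lemma cntOf_lt (f : ℕ → Bool) {i j : ℕ} (hij : i < j) (hi : f i = false) :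
    cntOf f i < cntOf f j := by
  have hsub : insert i ((Finset.range i).filter fun j => f j = false) ⊆
      (Finset.range j).filter fun j => f j = false := by
    intro x hx
    simp only [Finset.mem_insert, Finset.mem_filter, Finset.mem_range] at hx ⊢
    rcases hx with rfl | ⟨hx1, hx2⟩
    · exact ⟨hij, hi⟩
    · exact ⟨by omega, hx2⟩
  have := Finset.card_le_card hsub
  rw [Finset.card_insert_of_notMem (by simp)] at this
  unfold cntOf; omega

lemma card_bound (f : ℕ → Bool) (N : ℕ) (t : Finset ℕ) (s : Finset (Fin N))
    (hs : ∀ i ∈ s, f i.val = false ∧ cntOf f i.val ∈ t) : s.card ≤ t.card := by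
  apply Finset.card_le_card_of_injOn (fun i => cntOf f i.val)
    (fun i hi => (hs i hi).2)
  intro i hi j hj hcnt
  by_contra hne
  have hne' : i.val ≠ j.val := fun h => hne (Fin.ext h)
  rcases Nat.lt_or_ge i.val j.val with h | h
  · exact absurd hcnt (Nat.ne_of_lt (cntOf_lt f h (hs i hi).1))
  · have h' : j.val < i.val := by omega
    exact absurd hcnt.symm (Nat.ne_of_lt (cntOf_lt f h' (hs j hj).1))

lemma card_filter_eq_cntOf (f : ℕ → Bool) (N : ℕ) :
    (Finset.univ.filter fun i : Fin N => f i.val = false).card = cntOf f N := by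
  unfold cntOf
  rw [Finset.card_filter, Finset.card_filter, ← Fin.sum_univ_eq_sum_range]

lemma core (Γ : Type) [DecidableEq Γ] (c : Γ) (N : ℕ)
    (P : FeedbackProtocol Γ Bool Bool (Bool × Bool) N)
    (hfix : P.FixedOrder)
    (hm : 2 * cntOf (fun i => P.ord (List.replicate i c)) N ≤ N) :
    ∃ (x y : Bool) (r : Fin N → Γ),
      P.corruptions x y r ≤ ⌈(N : ℚ) / 4⌉₊ ∧ P.outA x (List.ofFn r) ≠ (x, y) := by
  set f : ℕ → Bool := fun i => P.ord (List.replicate i c) with hf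
  set m := cntOf f N with hmdef
  set k := (m + 1) / 2 with hk
  set step : ℕ → List Γ → Γ := fun i h =>
    if f i then P.nextA false h else P.nextB (decide (k ≤ cntOf f i)) h with hstep
  set r : Fin N → Γ := fun i => step i.val (buildT step i.val) with hr
  have hofn : List.ofFn r = buildT step N := by
    apply List.ext_getElem
    · simp [buildT_length]
    · intro j h1 h2
      simp only [List.getElem_ofFn, hr]
      exact (buildT_getElem step (by rwa [buildT_length] at h2) h2).symm
  have hordlen : ∀ h : List Γ, P.ord h = f h.length := fun h =>
    hfix h (List.replicate h.length c) (by simp)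
  have hsent : ∀ (x y : Bool) (i : Fin N), P.sent x y r i =
      if f i.val then P.nextA x (buildT step i.val) else P.nextB y (buildT step i.val) := by
    intro x y i
    have ht : (List.ofFn r).take i.val = buildT step i.val := by
      rw [hofn]; exact buildT_take step i.isLt.le
    simp only [FeedbackProtocol.sent, ht, hordlen (buildT step i.val), buildT_length]
  have hsub : ∀ (y : Bool) (i : Fin N), P.sent false y r i ≠ r i →
      f i.val = false ∧ y ≠ decide (k ≤ cntOf f i.val) := by
    intro y i hne
    rw [hsent] at hne
    cases hfi : f i.val with
    | false =>
      refine ⟨rfl, fun hy => hne ?_⟩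
      show _ = step i.val (buildT step i.val)
      simp [hstep, hfi, ← hy]
    | true =>
      exfalso; apply hne
      show _ = step i.val (buildT step i.val)
      simp [hstep, hfi]
  have hcor : ∀ y : Bool, P.corruptions false y r ≤
      (Finset.univ.filter fun i : Fin N =>
        f i.val = false ∧ y ≠ decide (k ≤ cntOf f i.val)).card := by
    intro y
    apply Finset.card_le_card
    intro i hi
    simp only [Finset.mem_filter, Finset.mem_univ, true_and] at hi ⊢
    exact hsub y i hi
  have hb1 : P.corruptions false true r ≤ k := by
    refine (hcor true).trans ?_
    have := card_bound f N (Finset.range k)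
      (Finset.univ.filter fun i : Fin N =>
        f i.val = false ∧ true ≠ decide (k ≤ cntOf f i.val)) ?_
    · simpa using this
    · intro i hi
      simp only [Finset.mem_filter, Finset.mem_univ, true_and] at hi
      refine ⟨hi.1, ?_⟩
      have : ¬ (k ≤ cntOf f i.val) := by
        intro h; exact hi.2 (by simp [h])
      simp only [Finset.mem_range]; omega
  have hb0 : P.corruptions false false r ≤ m - k := by
    refine (hcor false).trans ?_
    have := card_bound f N (Finset.Ico k m)
      (Finset.univ.filter fun i : Fin N =>
        f i.val = false ∧ false ≠ decide (k ≤ cntOf f i.val)) ?_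
    · simpa [Nat.card_Ico] using this
    · intro i hi
      simp only [Finset.mem_filter, Finset.mem_univ, true_and] at hi
      refine ⟨hi.1, ?_⟩
      have h1 : k ≤ cntOf f i.val := by
        by_contra h
        exact hi.2 (by simp [h])
      have h2 : cntOf f i.val < m := hmdef ▸ cntOf_lt f i.isLt hi.1
      simp only [Finset.mem_Ico]; exact ⟨h1, h2⟩
  have hceil : k ≤ ⌈(N : ℚ) / 4⌉₊ := by
    rcases Nat.eq_zero_or_pos k with h0 | h0
    · omega
    · have hlt : ((k - 1 : ℕ) : ℚ) < (N : ℚ) / 4 := by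
        rw [lt_div_iff₀ (by norm_num : (0:ℚ) < 4)]
        have : ((k - 1) * 4 : ℕ) < N := by omega
        exact_mod_cast this
      have := Nat.lt_ceil.mpr hlt
      omega
  have hceil0 : m - k ≤ ⌈(N : ℚ) / 4⌉₊ := le_trans (by omega) hceil
  by_cases hout : P.outA false (List.ofFn r) = (false, false)
  · exact ⟨false, true, r, hb1.trans hceil, by rw [hout]; simp⟩
  · exact ⟨false, false, r, hb0.trans hceil0, hout⟩

end FeedbackAux

/-- For every finite alphabet Γ and every deterministic feedback protocol
of length N over Γ with a fixed order of speaking, in which Alice holds x ∈ {0,1},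
Bob holds y ∈ {0,1}, and both parties must output the pair (x,y): there exist an input
pair (x,y) and a noise pattern with at most ⌈N/4⌉ corrupted rounds under which some
party's output differs from (x,y). -/

theorem feedback_fixed_order_impossibility_quarter
    (Γ : Type) [Fintype Γ] [DecidableEq Γ] [Nonempty Γ] (N : ℕ)
    (P : FeedbackProtocol Γ Bool Bool (Bool × Bool) N)
    (hfix : P.FixedOrder) :
    ∃ (x y : Bool) (r : Fin N → Γ),
      P.corruptions x y r ≤ ⌈(N : ℚ) / 4⌉₊ ∧
      (P.outA x (List.ofFn r) ≠ (x, y) ∨ P.outB y (List.ofFn r) ≠ (x, y)) := by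
  obtain ⟨c⟩ := ‹Nonempty Γ›
  have hsum : FeedbackAux.cntOf (fun i => P.ord (List.replicate i c)) N +
      FeedbackAux.cntOf (fun i => !(P.ord (List.replicate i c))) N = N := by
    unfold FeedbackAux.cntOf
    have h1 : ((Finset.range N).filter fun j => (!(P.ord (List.replicate j c))) = false) =
        (Finset.range N).filter fun j => ¬ (P.ord (List.replicate j c) = false) := by
      apply Finset.filter_congr
      intro j _
      cases P.ord (List.replicate j c) <;> simp
    rw [h1, Finset.card_filter_add_card_filter_not, Finset.card_range]
  rcases Nat.le_or_le (2 * FeedbackAux.cntOf (fun i => P.ord (List.replicate i c)) N) N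
    with hc | hc
  · obtain ⟨x, y, r, h1, h2⟩ := FeedbackAux.core Γ c N P hfix hc
    exact ⟨x, y, r, h1, Or.inl h2⟩
  · set Q : FeedbackProtocol Γ Bool Bool (Bool × Bool) N :=
      { ord := fun h => !(P.ord h)
        nextA := P.nextB
        nextB := P.nextA
        outA := fun x h => (P.outB x h).swap
        outB := fun y h => (P.outA y h).swap } with hQ
    have hQfix : Q.FixedOrder := by
      intro h h' hl
      simp only [hQ]
      rw [hfix h h' hl]
    have hQc : 2 * FeedbackAux.cntOf (fun i => Q.ord (List.replicate i c)) N ≤ N := by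
      have : (fun i => Q.ord (List.replicate i c)) =
          fun i => !(P.ord (List.replicate i c)) := rfl
      rw [this]; omega
    obtain ⟨x, y, r, h1, h2⟩ := FeedbackAux.core Γ c N Q hQfix hQc
    have hsent : ∀ i : Fin N, Q.sent x y r i = P.sent y x r i := by
      intro i
      simp only [FeedbackProtocol.sent, hQ]
      cases P.ord ((List.ofFn r).take i.val) <;> simp
    have hcorr : P.corruptions y x r = Q.corruptions x y r := by
      unfold FeedbackProtocol.corruptions
      congr 1
      apply Finset.filter_congr
      intro i _
      rw [hsent i]
    refine ⟨y, x, r, by rw [hcorr]; exact h1, Or.inr ?_⟩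
    intro hcon
    apply h2
    show (P.outB x (List.ofFn r)).swap = (x, y)
    rw [hcon]
    rfl
end

section
/- For every ε with 0 < ε < 1/3 and every noiseless alternating binary protocol π of length n, there exists a deterministic robust interactive protocol Π with noiseless feedback over a 3-symbol alphabet (whose order of speaking may depend on the noise, via the jointly known received symbols), of length N ≤ c·n/ε for an absolute constant c > 0, such that for every input pair (x,y) and every noise pattern with at most (1/3 − ε)·N corrupted rounds, both parties output the transcript π(x,y). -/
namespace Sim


variable {X Y : Type} (pr : AltProtocol X Y) (x : X) (y : Y)

lemma transcript_length (m : ℕ) : (pr.transcript x y m).length = m := by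
  induction m with
  | zero => rfl
  | succ k ih => simp [AltProtocol.transcript, ih]

/-- the true next bit at (0-indexed) position m -/
def tbit (m : ℕ) : Bool :=
  if m % 2 = 0 then pr.nextA x (pr.transcript x y m) else pr.nextB y (pr.transcript x y m)

lemma transcript_succ (m : ℕ) :
    pr.transcript x y (m+1) = pr.transcript x y m ++ [tbit pr x y m] := by
  simp [AltProtocol.transcript, tbit, transcript_length]

lemma transcript_take {m' m : ℕ} (h : m' ≤ m) :
    (pr.transcript x y m).take m' = pr.transcript x y m' := by
  induction m with
  | zero => interval_cases m'; simp [AltProtocol.transcript]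
  | succ k ih =>
    rcases Nat.lt_or_ge m' (k+1) with h' | h'
    · rw [transcript_succ, List.take_append_of_le_length (by rw [transcript_length]; omega),
        ih (by omega)]
    · have : m' = k + 1 := by omega
      subst this
      rw [List.take_of_length_le (by rw [transcript_length])]


lemma take_succ_eq (l : List Bool) {i : ℕ} (h : i < l.length) :
    l.take (i+1) = l.take i ++ [l.getD i false] := by
  rw [List.take_succ, List.getElem?_eq_getElem h, List.getD_eq_getElem _ _ h]
  rfl

lemma transcript_getD {i m : ℕ} (h : i < m) :
    (pr.transcript x y m).getD i false = tbit pr x y i := by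
  have hi : i < (pr.transcript x y m).length := by rw [transcript_length]; omega
  have h1 := take_succ_eq (pr.transcript x y m) hi
  rw [transcript_take pr x y (show i+1 ≤ m by omega), transcript_take pr x y (show i ≤ m by omega),
      transcript_succ] at h1
  simpa using h1.symm

/-- Alice's consistency check -/
def okA (T : List Bool) : Bool :=
  (List.range T.length).all fun i =>
    decide (i % 2 = 0 → T.getD i false = pr.nextA x (T.take i))

/-- Bob's consistency check -/
def okB (T : List Bool) : Bool :=
  (List.range T.length).all fun i =>
    decide (i % 2 = 1 → T.getD i false = pr.nextB y (T.take i))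

lemma okA_transcript (m : ℕ) : okA pr x (pr.transcript x y m) = true := by
  rw [okA, List.all_eq_true]
  intro i hi
  rw [List.mem_range, transcript_length] at hi
  rw [decide_eq_true_iff]
  intro heven
  rw [transcript_getD pr x y hi, transcript_take pr x y (le_of_lt hi), tbit, if_pos heven]

lemma okB_transcript (m : ℕ) : okB pr y (pr.transcript x y m) = true := by
  rw [okB, List.all_eq_true]
  intro i hi
  rw [List.mem_range, transcript_length] at hi
  rw [decide_eq_true_iff]
  intro hodd
  rw [transcript_getD pr x y hi, transcript_take pr x y (le_of_lt hi), tbit,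
    if_neg (by omega)]

def goodLen (T : List Bool) : ℕ :=
  Nat.findGreatest (fun g => T.take g = pr.transcript x y g) T.length

def psi (T : List Bool) : ℤ :=
  (T.length : ℤ) - 3 * (((T.length - goodLen pr x y T) + 1) / 2 : ℕ)

lemma goodLen_spec (T : List Bool) :
    T.take (goodLen pr x y T) = pr.transcript x y (goodLen pr x y T) := by
  have h0 : T.take 0 = pr.transcript x y 0 := rfl
  exact Nat.findGreatest_spec (P := fun g => T.take g = pr.transcript x y g) (Nat.zero_le _) h0

lemma goodLen_le (T : List Bool) : goodLen pr x y T ≤ T.length :=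
  Nat.findGreatest_le (P := fun g => T.take g = pr.transcript x y g) _

lemma good_le_length {T : List Bool} {g : ℕ} (hg : T.take g = pr.transcript x y g) :
    g ≤ T.length := by
  have := congrArg List.length hg
  simp only [List.length_take, transcript_length] at this
  omega

lemma le_goodLen {T : List Bool} {g : ℕ} (hg : T.take g = pr.transcript x y g) :
    g ≤ goodLen pr x y T :=
  Nat.le_findGreatest (P := fun g => T.take g = pr.transcript x y g) (good_le_length pr x y hg) hg

lemma psi_ge {T : List Bool} {g : ℕ} (hg : T.take g = pr.transcript x y g) :
    (T.length : ℤ) - 3 * (((T.length - g) + 1) / 2 : ℕ) ≤ psi pr x y T := by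
  have h1 := le_goodLen pr x y hg
  have h2 := goodLen_le pr x y T
  have hdiv : ((T.length - goodLen pr x y T) + 1) / 2 ≤ ((T.length - g) + 1) / 2 :=
    Nat.div_le_div_right (by omega)
  unfold psi
  omega

lemma psi_le (T : List Bool) : psi pr x y T ≤ (goodLen pr x y T : ℤ) := by
  have h2 := goodLen_le pr x y T
  unfold psi
  omega


/-- update rule for the common state: 2 = "delete last two bits", 0/1 = append -/
def step (T : List Bool) (s : Fin 3) : List Bool :=
  if s = 2 then T.take (T.length - 2) else T ++ [decide (s = 1)]

def sentA (T : List Bool) : Fin 3 :=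
  if okA pr x T then (if pr.nextA x T then 1 else 0) else 2

def sentB (T : List Bool) : Fin 3 :=
  if okB pr y T then (if pr.nextB y T then 1 else 0) else 2

def sentSym (T : List Bool) : Fin 3 :=
  if T.length % 2 = 0 then sentA pr x T else sentB pr y T

lemma take_good {T : List Bool} {g : ℕ} (h : g ≤ goodLen pr x y T) :
    T.take g = pr.transcript x y g := by
  have := goodLen_spec pr x y T
  calc T.take g = (T.take (goodLen pr x y T)).take g := by
        rw [List.take_take, min_eq_left h]
    _ = pr.transcript x y g := by rw [this, transcript_take pr x y h]

/-- Any round decreases the potential by at most 2. -/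
lemma psi_step_ge (T : List Bool) (s : Fin 3) :
    psi pr x y T - 2 ≤ psi pr x y (step T s) := by
  have hPG := goodLen_spec pr x y T
  have hGL := goodLen_le pr x y T
  by_cases hs : s = 2
  · rw [step, if_pos hs]
    rcases le_or_gt (goodLen pr x y T) (T.length - 2) with h | h
    · have hg' : (T.take (T.length - 2)).take (goodLen pr x y T)
          = pr.transcript x y (goodLen pr x y T) := by
        rw [List.take_take, min_eq_left h, hPG]
      have key := psi_ge pr x y hg'
      have hlen : (T.take (T.length - 2)).length = T.length - 2 := by
        rw [List.length_take]; omega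
      refine le_trans ?_ key
      unfold psi
      omega
    · have hTg : T.take (T.length - 2) = pr.transcript x y (T.length - 2) :=
        take_good pr x y (by omega)
      have hg' : (T.take (T.length - 2)).take (T.length - 2)
          = pr.transcript x y (T.length - 2) := by
        rw [List.take_take, min_self]; exact hTg
      have key := psi_ge pr x y hg'
      have hlen : (T.take (T.length - 2)).length = T.length - 2 := by
        rw [List.length_take]; omega
      refine le_trans ?_ key
      unfold psi
      omega
  · rw [step, if_neg hs]
    have hg' : (T ++ [decide (s = 1)]).take (goodLen pr x y T)
        = pr.transcript x y (goodLen pr x y T) := by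
      rw [List.take_append_of_le_length hGL, hPG]
    have key := psi_ge pr x y hg'
    have hlen : (T ++ [decide (s = 1)]).length = T.length + 1 := by simp
    refine le_trans ?_ key
    unfold psi
    omega

/-- helper: appending any bit when `G < L` and `L - G` is odd gains 1 -/
lemma psi_append_odd {T : List Bool} (hb : goodLen pr x y T < T.length)
    (hpar : T.length % 2 ≠ goodLen pr x y T % 2) (v : Bool) :
    psi pr x y T + 1 ≤ psi pr x y (T ++ [v]) := by
  have hPG := goodLen_spec pr x y T
  have hg' : (T ++ [v]).take (goodLen pr x y T) = pr.transcript x y (goodLen pr x y T) := by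
    rw [List.take_append_of_le_length (by omega), hPG]
  have key := psi_ge pr x y hg'
  have hlen : (T ++ [v]).length = T.length + 1 := by simp
  refine le_trans ?_ key
  rw [hlen]
  unfold psi
  omega

/-- helper: deleting two when `G < L` gains 1 -/
lemma psi_delete_bad {T : List Bool} (hb : goodLen pr x y T < T.length) :
    psi pr x y T + 1 ≤ psi pr x y (T.take (T.length - 2)) := by
  have hPG := goodLen_spec pr x y T
  rcases le_or_gt (goodLen pr x y T) (T.length - 2) with h | h
  · have hg' : (T.take (T.length - 2)).take (goodLen pr x y T)
        = pr.transcript x y (goodLen pr x y T) := by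
      rw [List.take_take, min_eq_left h, hPG]
    have key := psi_ge pr x y hg'
    have hlen : (T.take (T.length - 2)).length = T.length - 2 := by
      rw [List.length_take]; omega
    refine le_trans ?_ key
    rw [hlen]
    unfold psi
    omega
  · -- G = L - 1, i.e. b = 1 : both removed cells leave a correct prefix of length L-2
    have hTg : T.take (T.length - 2) = pr.transcript x y (T.length - 2) :=
      take_good pr x y (by omega)
    have hg' : (T.take (T.length - 2)).take (T.length - 2)
        = pr.transcript x y (T.length - 2) := by
      rw [List.take_take, min_self]; exact hTg
    have key := psi_ge pr x y hg'
    have hlen : (T.take (T.length - 2)).length = T.length - 2 := by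
      rw [List.length_take]; omega
    refine le_trans ?_ key
    rw [hlen]
    unfold psi
    omega

/-- An uncorrupted round increases the potential by at least 1. -/
lemma psi_step_clean (T : List Bool) :
    psi pr x y T + 1 ≤ psi pr x y (step T (sentSym pr x y T)) := by
  have hPG := goodLen_spec pr x y T
  have hGL := goodLen_le pr x y T
  rcases eq_or_lt_of_le hGL with hb | hb
  · -- b = 0 : the state is a correct prefix; the speaker appends the true next bit
    have hT : T = pr.transcript x y T.length := by
      conv_lhs => rw [← List.take_length (l := T)]
      rw [← hb, hPG, hb]
    have hsent : sentSym pr x y T = (if tbit pr x y T.length then 1 else 0) := by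
      rw [sentSym, tbit]
      by_cases hpar : T.length % 2 = 0
      · rw [if_pos hpar, if_pos hpar, sentA]
        have hok : okA pr x T = true := by rw [hT]; exact okA_transcript pr x y _
        rw [hok, if_pos rfl, ← hT]
      · rw [if_neg hpar, if_neg hpar, sentB]
        have hok : okB pr y T = true := by rw [hT]; exact okB_transcript pr x y _
        rw [hok, if_pos rfl, ← hT]
    have hs2 : sentSym pr x y T ≠ 2 := by
      rw [hsent]; rcases tbit pr x y T.length <;> decide
    have hdec : (decide (sentSym pr x y T = 1)) = tbit pr x y T.length := by
      rw [hsent]; rcases tbit pr x y T.length <;> decide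
    rw [step, if_neg hs2, hdec]
    have hT' : T ++ [tbit pr x y T.length] = pr.transcript x y (T.length + 1) := by
      rw [transcript_succ, ← hT]
    have hg' : (T ++ [tbit pr x y T.length]).take (T.length + 1)
        = pr.transcript x y (T.length + 1) := by
      rw [← hT']; apply List.take_of_length_le; simp
    have key := psi_ge pr x y hg'
    have hlen : (T ++ [tbit pr x y T.length]).length = T.length + 1 := by simp
    refine le_trans ?_ key
    rw [hlen]
    unfold psi
    omega
  · -- b ≥ 1 : there is a first bad position G
    have hnP : ¬ (T.take (goodLen pr x y T + 1)
        = pr.transcript x y (goodLen pr x y T + 1)) :=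
      Nat.findGreatest_is_greatest (P := fun g => T.take g = pr.transcript x y g)
        (n := T.length) (Nat.lt_succ_self _) (by omega)
    have hneq : T.getD (goodLen pr x y T) false ≠ tbit pr x y (goodLen pr x y T) := by
      intro hEq
      apply hnP
      rw [take_succ_eq T hb, hPG, hEq, transcript_succ]
    by_cases hpar : T.length % 2 = goodLen pr x y T % 2
    · -- the owner of position G speaks: it detects the inconsistency and sends 2
      have hsent : sentSym pr x y T = 2 := by
        rw [sentSym]
        by_cases hp : T.length % 2 = 0
        · have hG2 : goodLen pr x y T % 2 = 0 := by omega
          have hok : ¬ (okA pr x T = true) := by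
            intro hall
            rw [okA, List.all_eq_true] at hall
            have h5 := hall (goodLen pr x y T) (by rw [List.mem_range]; omega)
            rw [decide_eq_true_iff] at h5
            apply hneq
            rw [h5 hG2, hPG, tbit, if_pos hG2]
          rw [if_pos hp, sentA, if_neg hok]
        · have hG2 : goodLen pr x y T % 2 = 1 := by omega
          have hok : ¬ (okB pr y T = true) := by
            intro hall
            rw [okB, List.all_eq_true] at hall
            have h5 := hall (goodLen pr x y T) (by rw [List.mem_range]; omega)
            rw [decide_eq_true_iff] at h5
            apply hneq
            rw [h5 hG2, hPG, tbit, if_neg (by omega)]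
          rw [if_neg hp, sentB, if_neg hok]
      rw [hsent, step, if_pos rfl]
      exact psi_delete_bad pr x y hb
    · -- the other party speaks (b odd): whatever it does gains 1
      by_cases hs : sentSym pr x y T = 2
      · rw [hs, step, if_pos rfl]
        exact psi_delete_bad pr x y hb
      · rw [step, if_neg hs]
        exact psi_append_odd pr x y hb hpar _

end Sim

namespace Sim

variable {X Y : Type} (pr : AltProtocol X Y) (x : X) (y : Y)

/-- the commonly known state reconstructed from the received symbols -/
def compT (h : List (Fin 3)) : List Bool := h.foldl step []

lemma compT_append (h : List (Fin 3)) (s : Fin 3) :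
    compT (h ++ [s]) = step (compT h) s := by
  rw [compT, compT, List.foldl_append]
  rfl

/-- the simulating feedback protocol -/
def Pdef (pr : AltProtocol X Y) (n N : ℕ) : FeedbackProtocol (Fin 3) X Y (List Bool) N where
  ord h := decide ((compT h).length % 2 = 0)
  nextA x' h := sentA pr x' (compT h)
  nextB y' h := sentB pr y' (compT h)
  outA _ h := (compT h).take n
  outB _ h := (compT h).take n

lemma sent_eq (n N : ℕ) (r : Fin N → Fin 3) (i : Fin N) :
    (Pdef pr n N).sent x y r i = sentSym pr x y (compT ((List.ofFn r).take i.val)) := by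
  have hord : ((Pdef pr n N).ord ((List.ofFn r).take i.val) = true)
      ↔ (compT ((List.ofFn r).take i.val)).length % 2 = 0 := by
    show decide _ = true ↔ _
    exact decide_eq_true_iff
  rw [FeedbackProtocol.sent, sentSym]
  by_cases hp : (compT ((List.ofFn r).take i.val)).length % 2 = 0
  · rw [if_pos (hord.mpr hp), if_pos hp]
    rfl
  · rw [if_neg (fun h => hp (hord.mp h)), if_neg hp]
    rfl

lemma main_ind (n N : ℕ) (r : Fin N → Fin 3) (i : ℕ) (hi : i ≤ N) :
    (i : ℤ) - 3 * ((Finset.univ.filter fun j : Fin N =>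
        j.val < i ∧ (Pdef pr n N).sent x y r j ≠ r j).card : ℤ)
      ≤ psi pr x y (compT ((List.ofFn r).take i)) := by
  induction i with
  | zero =>
    have h0 : psi pr x y (compT ((List.ofFn r).take 0)) = 0 := by
      rw [List.take_zero]
      simp [compT, psi, goodLen]
    rw [h0]
    have : (0:ℤ) ≤ ((Finset.univ.filter fun j : Fin N =>
        j.val < 0 ∧ (Pdef pr n N).sent x y r j ≠ r j).card : ℤ) := by positivity
    omega
  | succ k ih =>
    have hk := ih (by omega)
    have hkN : k < N := by omega
    have htake : (List.ofFn r).take (k+1)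
        = (List.ofFn r).take k ++ [r ⟨k, hkN⟩] := by
      rw [List.take_succ, List.getElem?_eq_getElem (by rw [List.length_ofFn]; omega)]
      simp
    rw [htake, compT_append]
    by_cases hc : (Pdef pr n N).sent x y r ⟨k, hkN⟩ = r ⟨k, hkN⟩
    · -- clean round
      have hfeq : (Finset.univ.filter fun j : Fin N =>
            j.val < k + 1 ∧ (Pdef pr n N).sent x y r j ≠ r j)
          = (Finset.univ.filter fun j : Fin N =>
            j.val < k ∧ (Pdef pr n N).sent x y r j ≠ r j) := by
        ext j
        simp only [Finset.mem_filter, Finset.mem_univ, true_and]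
        constructor
        · rintro ⟨hj, hcj⟩
          refine ⟨?_, hcj⟩
          rcases Nat.lt_succ_iff_lt_or_eq.mp hj with h | h
          · exact h
          · exfalso; apply hcj; rw [show j = ⟨k, hkN⟩ from Fin.ext h]; exact hc
        · rintro ⟨hj, hcj⟩
          exact ⟨by omega, hcj⟩
      have hr : r ⟨k, hkN⟩ = sentSym pr x y (compT ((List.ofFn r).take k)) := by
        rw [← hc, sent_eq]
      have hstep := psi_step_clean pr x y (compT ((List.ofFn r).take k))
      rw [← hr] at hstep
      rw [hfeq]
      push_cast
      omega
    · -- corrupted round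
      have hfeq : (Finset.univ.filter fun j : Fin N =>
            j.val < k + 1 ∧ (Pdef pr n N).sent x y r j ≠ r j)
          = insert ⟨k, hkN⟩ (Finset.univ.filter fun j : Fin N =>
            j.val < k ∧ (Pdef pr n N).sent x y r j ≠ r j) := by
        ext j
        simp only [Finset.mem_filter, Finset.mem_univ, true_and, Finset.mem_insert]
        constructor
        · rintro ⟨hj, hcj⟩
          rcases Nat.lt_succ_iff_lt_or_eq.mp hj with h | h
          · exact Or.inr ⟨h, hcj⟩
          · exact Or.inl (Fin.ext h)
        · rintro (h | ⟨hj, hcj⟩)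
          · subst h; exact ⟨Nat.lt_succ_self k, hc⟩
          · exact ⟨by omega, hcj⟩
      have hcard : (Finset.univ.filter fun j : Fin N =>
            j.val < k + 1 ∧ (Pdef pr n N).sent x y r j ≠ r j).card
          = (Finset.univ.filter fun j : Fin N =>
            j.val < k ∧ (Pdef pr n N).sent x y r j ≠ r j).card + 1 := by
        rw [hfeq, Finset.card_insert_of_notMem]
        simp
      have hstep := psi_step_ge pr x y (compT ((List.ofFn r).take k)) (r ⟨k, hkN⟩)
      rw [hcard]
      push_cast
      omega

end Sim


/-- For every ε with 0 < ε < 1/3 and every noiseless alternating binary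
protocol π of length n, there is a deterministic robust feedback protocol over a
3-symbol alphabet (the order of speaking may depend on the noise via the jointly known
received symbols), of length N ≤ c·n/ε for an absolute constant c > 0, such that for
every input pair and every noise pattern with at most (1/3 − ε)·N corrupted rounds,
both parties output the transcript π(x,y). -/
theorem feedback_arbitrary_order_large_alphabet :
    ∃ c : ℝ, 0 < c ∧
      ∀ (X Y : Type) (pr : AltProtocol X Y) (n : ℕ) (ε : ℝ),
        0 < ε → ε < 1/3 →
        ∃ (N : ℕ) (P : FeedbackProtocol (Fin 3) X Y (List Bool) N),
          (N : ℝ) ≤ c * n / ε ∧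
          ∀ (x : X) (y : Y) (r : Fin N → Fin 3),
            (P.corruptions x y r : ℝ) ≤ (1/3 - ε) * N →
            P.outA x (List.ofFn r) = pr.transcript x y n ∧
            P.outB y (List.ofFn r) = pr.transcript x y n := by
  refine ⟨4, by norm_num, ?_⟩
  intro X Y pr n ε hε hε3
  set N := ⌈(n : ℝ) / (3 * ε)⌉₊ with hN
  have h3e : (0:ℝ) < 3 * ε := by linarith
  refine ⟨N, Sim.Pdef pr n N, ?_, ?_⟩
  · rcases Nat.eq_zero_or_pos n with h0 | h1
    · subst h0
      simp [hN]
    · have h1' : (1:ℝ) ≤ n := by exact_mod_cast h1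
      have hc := Nat.ceil_lt_add_one (a := (n:ℝ)/(3*ε)) (by positivity)
      rw [← hN] at hc
      have hkey : (n:ℝ)/(3*ε) + 1 ≤ 4*n/ε := by
        rw [div_add' _ _ _ (ne_of_gt h3e), div_le_div_iff₀ h3e hε]
        nlinarith
      calc (N:ℝ) ≤ (n:ℝ)/(3*ε) + 1 := le_of_lt hc
        _ ≤ 4*n/ε := hkey
        _ = 4*(n:ℝ)/ε := by ring_nf
  · intro x y r hcor
    set t := (Sim.Pdef pr n N).corruptions x y r with ht
    have hmain := Sim.main_ind pr x y n N r N le_rfl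
    have hfull : (List.ofFn r).take N = List.ofFn r :=
      List.take_of_length_le (le_of_eq (List.length_ofFn (f := r)))
    simp only [hfull] at hmain
    have hset : (Finset.univ.filter fun j : Fin N =>
          j.val < N ∧ (Sim.Pdef pr n N).sent x y r j ≠ r j)
        = (Finset.univ.filter fun j : Fin N =>
          (Sim.Pdef pr n N).sent x y r j ≠ r j) := by
      ext j
      simp [j.isLt]
    rw [hset] at hmain
    rw [← FeedbackProtocol.corruptions, ← ht] at hmain
    -- numeric bound: n ≤ N - 3t over ℝ
    have hceil := Nat.le_ceil ((n:ℝ)/(3*ε))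
    rw [← hN] at hceil
    have h1 : (n:ℝ) ≤ 3*ε*N := by
      calc (n:ℝ) = 3*ε*((n:ℝ)/(3*ε)) := by field_simp
        _ ≤ 3*ε*N := by nlinarith
    have h2 : (n:ℝ) ≤ (N:ℝ) - 3*t := by nlinarith
    have hZ : (n:ℤ) ≤ (N:ℤ) - 3*(t:ℤ) := by exact_mod_cast h2
    have hpsile := Sim.psi_le pr x y (Sim.compT (List.ofFn r))
    have hgood : n ≤ Sim.goodLen pr x y (Sim.compT (List.ofFn r)) := by
      have : (n:ℤ) ≤ (Sim.goodLen pr x y (Sim.compT (List.ofFn r)) : ℤ) := by omega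
      exact_mod_cast this
    have hout : (Sim.compT (List.ofFn r)).take n = pr.transcript x y n :=
      Sim.take_good pr x y hgood
    exact ⟨hout, hout⟩
end

section
/- For every finite alphabet Σ and every deterministic robust interactive protocol with noiseless feedback of length N over Σ, in which Alice holds x ∈ {0,1}, Bob holds y ∈ {0,1}, and both parties are required to output the pair (x,y): there exist an input pair (x,y) and a noise pattern with at most ⌈N/3⌉ corrupted rounds under which some party's output differs from (x,y). -/
namespace FbAux


def m3 (u v : ℤ) : ℤ := max (max (u+1) (v+1)) 0

lemma m3_nonneg (u v : ℤ) : 0 ≤ m3 u v := le_max_right _ _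
lemma le_m3_l (u v : ℤ) : u + 1 ≤ m3 u v := le_trans (le_max_left _ _) (le_max_left _ _)
lemma le_m3_r (u v : ℤ) : v + 1 ≤ m3 u v := le_trans (le_max_right _ _) (le_max_left _ _)
lemma m3_cases (u v : ℤ) : m3 u v = u+1 ∨ m3 u v = v+1 ∨ m3 u v = 0 := by
  unfold m3
  rcases max_choice (max (u+1) (v+1)) 0 with h | h
  · rcases max_choice (u+1) (v+1) with h' | h' <;> rw [h, h']
    · exact Or.inl rfl
    · exact Or.inr (Or.inl rfl)
  · exact Or.inr (Or.inr h)

lemma m3_sub (u v : ℤ) : m3 u v ≤ m3 (u-1) (v-1) + 1 := by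
  have h1 := le_m3_l (u-1) (v-1)
  have h2 := le_m3_r (u-1) (v-1)
  have h3 := m3_nonneg (u-1) (v-1)
  rcases m3_cases u v with h | h | h <;> omega

/-- Invariant: arguments `a b u v` are the remaining corruption budgets of the four
worlds (x,y) = (ff,ff), (ff,tt), (tt,ff), (tt,tt); `n` is the number of remaining rounds. -/
def Phi (n a b u v : ℤ) : Prop :=
  (0 ≤ a ∧ 0 ≤ b ∧ n ≤ a + b + m3 u v) ∨
  (0 ≤ u ∧ 0 ≤ v ∧ n ≤ u + v + m3 a b) ∨
  (0 ≤ a ∧ 0 ≤ u ∧ n ≤ a + u + m3 b v) ∨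
  (0 ≤ b ∧ 0 ≤ v ∧ n ≤ b + v + m3 a u)

lemma Phi_mono {m n a b u v : ℤ} (h : m ≤ n) (H : Phi n a b u v) : Phi m a b u v := by
  unfold Phi at *
  rcases H with ⟨h1,h2,h3⟩|⟨h1,h2,h3⟩|⟨h1,h2,h3⟩|⟨h1,h2,h3⟩
  · exact Or.inl ⟨h1,h2, le_trans h h3⟩
  · exact Or.inr (Or.inl ⟨h1,h2, le_trans h h3⟩)
  · exact Or.inr (Or.inr (Or.inl ⟨h1,h2, le_trans h h3⟩))
  · exact Or.inr (Or.inr (Or.inr ⟨h1,h2, le_trans h h3⟩))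

lemma Phi_swap {n a b u v : ℤ} (H : Phi n a b u v) : Phi n a u b v := by
  unfold Phi at *
  tauto

lemma stepA {n a b u v : ℤ} (hn : 0 ≤ n) (H : Phi (n+1) a b u v) :
    Phi n a b (u-1) (v-1) ∨ Phi n (a-1) (b-1) u v := by
  unfold Phi at *
  rcases H with ⟨ha,hb,hle⟩|⟨hu,hv,hle⟩|⟨ha,hu,hle⟩|⟨hb,hv,hle⟩
  · -- row0 alive: decrement row1
    refine Or.inl (Or.inl ⟨ha, hb, ?_⟩)
    have := m3_sub u v; omega
  · -- row1 alive: decrement row0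
    refine Or.inr (Or.inr (Or.inl ⟨hu, hv, ?_⟩))
    have := m3_sub a b; omega
  · -- col0 alive
    rcases m3_cases b v with hm | hm | hm
    · -- m3 b v = b+1
      by_cases hb : 0 ≤ b
      · refine Or.inl (Or.inl ⟨ha, hb, ?_⟩)
        have := le_m3_l (u-1) (v-1); omega
      · -- then b = -1, m3 b v = 0
        have hm0 : m3 b v = 0 := by have := m3_nonneg b v; omega
        by_cases hu1 : 1 ≤ u
        · refine Or.inl (Or.inr (Or.inr (Or.inl ⟨ha, by omega, ?_⟩)))
          have := m3_nonneg b (v-1); omega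
        · refine Or.inr (Or.inr (Or.inr (Or.inl ⟨by omega, hu, ?_⟩)))
          have := m3_nonneg (b-1) v; omega
    · -- m3 b v = v+1
      by_cases hv : 0 ≤ v
      · refine Or.inr (Or.inr (Or.inl ⟨hu, hv, ?_⟩))
        have := le_m3_l (a-1) (b-1); omega
      · have hm0 : m3 b v = 0 := by have := m3_nonneg b v; omega
        by_cases hu1 : 1 ≤ u
        · refine Or.inl (Or.inr (Or.inr (Or.inl ⟨ha, by omega, ?_⟩)))
          have := m3_nonneg b (v-1); omega
        · refine Or.inr (Or.inr (Or.inr (Or.inl ⟨by omega, hu, ?_⟩)))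
          have := m3_nonneg (b-1) v; omega
    · -- m3 b v = 0
      by_cases hu1 : 1 ≤ u
      · refine Or.inl (Or.inr (Or.inr (Or.inl ⟨ha, by omega, ?_⟩)))
        have := m3_nonneg b (v-1); omega
      · refine Or.inr (Or.inr (Or.inr (Or.inl ⟨by omega, hu, ?_⟩)))
        have := m3_nonneg (b-1) v; omega
  · -- col1 alive
    rcases m3_cases a u with hm | hm | hm
    · -- m3 a u = a+1
      by_cases ha : 0 ≤ a
      · refine Or.inl (Or.inl ⟨ha, hb, ?_⟩)
        have := le_m3_r (u-1) (v-1); omega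
      · have hm0 : m3 a u = 0 := by have := m3_nonneg a u; omega
        by_cases hv1 : 1 ≤ v
        · refine Or.inl (Or.inr (Or.inr (Or.inr ⟨hb, by omega, ?_⟩)))
          have := m3_nonneg a (u-1); omega
        · refine Or.inr (Or.inr (Or.inr (Or.inr ⟨by omega, hv, ?_⟩)))
          have := m3_nonneg (a-1) u; omega
    · -- m3 a u = u+1
      by_cases hu : 0 ≤ u
      · refine Or.inr (Or.inr (Or.inl ⟨hu, hv, ?_⟩))
        have := le_m3_r (a-1) (b-1); omega
      · have hm0 : m3 a u = 0 := by have := m3_nonneg a u; omega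
        by_cases hv1 : 1 ≤ v
        · refine Or.inl (Or.inr (Or.inr (Or.inr ⟨hb, by omega, ?_⟩)))
          have := m3_nonneg a (u-1); omega
        · refine Or.inr (Or.inr (Or.inr (Or.inr ⟨by omega, hv, ?_⟩)))
          have := m3_nonneg (a-1) u; omega
    · -- m3 a u = 0
      by_cases hv1 : 1 ≤ v
      · refine Or.inl (Or.inr (Or.inr (Or.inr ⟨hb, by omega, ?_⟩)))
        have := m3_nonneg a (u-1); omega
      · refine Or.inr (Or.inr (Or.inr (Or.inr ⟨by omega, hv, ?_⟩)))
        have := m3_nonneg (a-1) u; omega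

lemma stepB {n a b u v : ℤ} (hn : 0 ≤ n) (H : Phi (n+1) a b u v) :
    Phi n a (b-1) u (v-1) ∨ Phi n (a-1) b (u-1) v := by
  rcases stepA hn (Phi_swap H) with h | h
  · exact Or.inl (Phi_swap h)
  · exact Or.inr (Phi_swap h)


variable {Γ : Type} [DecidableEq Γ] [Nonempty Γ] {N : ℕ}
  (P : FeedbackProtocol Γ Bool Bool (Bool × Bool) N)

/-- The symbol world `(x,y)` sends after receiving history `h`. -/
def sentW (x y : Bool) (h : List Γ) : Γ :=
  if P.ord h then P.nextA x h else P.nextB y h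

noncomputable def cnt (x y : Bool) (h : List Γ) : ℕ :=
  ((Finset.range h.length).filter fun i =>
      sentW P x y (h.take i) ≠ h.getD i (Classical.arbitrary Γ)).card

lemma cnt_nil (x y : Bool) : cnt P x y ([] : List Γ) = 0 := by
  simp [cnt]

lemma cnt_append (x y : Bool) (h : List Γ) (γ : Γ) :
    cnt P x y (h ++ [γ]) = cnt P x y h + (if sentW P x y h = γ then 0 else 1) := by
  unfold cnt
  have hl : (h ++ [γ]).length = h.length + 1 := by simp
  rw [hl, Finset.range_add_one, Finset.filter_insert]
  have hfilter : ((Finset.range h.length).filter fun i =>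
      sentW P x y ((h ++ [γ]).take i) ≠ (h ++ [γ]).getD i (Classical.arbitrary Γ)) =
      ((Finset.range h.length).filter fun i =>
      sentW P x y (h.take i) ≠ h.getD i (Classical.arbitrary Γ)) := by
    apply Finset.filter_congr
    intro i hi
    rw [Finset.mem_range] at hi
    rw [List.take_append_of_le_length (le_of_lt hi),
      List.getD_append _ _ _ _ hi]
  have htake : (h ++ [γ]).take h.length = h := List.take_left
  have hget : (h ++ [γ]).getD h.length (Classical.arbitrary Γ) = γ := by
    rw [List.getD_append_right _ _ _ _ le_rfl]
    simp
  rw [htake, hget, hfilter]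
  by_cases hs : sentW P x y h = γ
  · simp [hs]
  · rw [if_pos hs, if_neg (by simpa using hs)]
    rw [Finset.card_insert_of_notMem (by simp)]

lemma corruptions_eq (x y : Bool) (r : Fin N → Γ) :
    P.corruptions x y r = cnt P x y (List.ofFn r) := by
  have key : ∀ (i : ℕ) (hiN : i < N),
      (List.ofFn r).getD i (Classical.arbitrary Γ) = r ⟨i, hiN⟩ := by
    intro i hiN
    rw [List.getD_eq_getElem _ _ (by simpa using hiN)]
    simp
  have hsent : ∀ i : Fin N, P.sent x y r i =
      sentW P x y ((List.ofFn r).take i.val) := fun i => rfl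
  unfold FeedbackProtocol.corruptions cnt
  refine Finset.card_bij' (fun (i : Fin N) _ => (i : ℕ))
    (fun j hj => (⟨j, by simpa using (Finset.mem_filter.mp hj).1⟩ : Fin N))
    ?_ ?_ ?_ ?_
  · intro i hi
    rw [Finset.mem_filter] at hi ⊢
    refine ⟨by simp, ?_⟩
    rw [key i.val i.isLt]
    rw [hsent i] at hi
    simpa using hi.2
  · intro j hj
    rw [Finset.mem_filter] at hj ⊢
    refine ⟨Finset.mem_univ _, ?_⟩
    have hjN : j < N := by simpa using hj.1
    have h2 := hj.2
    rw [key j hjN] at h2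
    rw [hsent ⟨j, hjN⟩]
    simpa using h2
  · intro i hi; rfl
  · intro j hj; rfl


lemma build (K : ℕ) (hNK : N ≤ 3*K+1) :
    ∀ n, n ≤ N → ∃ h : List Γ, h.length = n ∧
      Phi ((N:ℤ) - n) ((K:ℤ) - cnt P false false h) ((K:ℤ) - cnt P false true h)
        ((K:ℤ) - cnt P true false h) ((K:ℤ) - cnt P true true h) := by
  intro n
  induction n with
  | zero =>
    intro _
    refine ⟨[], rfl, ?_⟩
    rw [cnt_nil, cnt_nil, cnt_nil, cnt_nil]
    simp only [Nat.cast_zero, sub_zero]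
    refine Or.inl ⟨by positivity, by positivity, ?_⟩
    have := le_m3_l (K:ℤ) K
    push_cast
    omega
  | succ n ih =>
    intro hn1
    obtain ⟨h, hlen, hPhi⟩ := ih (by omega)
    have hle : (0:ℤ) ≤ (N:ℤ) - (n+1) := by push_cast; omega
    have hsplit : (N:ℤ) - n = ((N:ℤ) - (n+1)) + 1 := by push_cast; ring
    rw [hsplit] at hPhi
    have ecast : ∀ m : ℕ, (K:ℤ) - (↑(m+1) : ℤ) = ((K:ℤ) - m) - 1 := by
      intro m; push_cast; ring
    by_cases hb : P.ord h
    · -- Alice speaks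
      have s00 : sentW P false false h = P.nextA false h := if_pos hb
      have s01 : sentW P false true h = P.nextA false h := if_pos hb
      have s10 : sentW P true false h = P.nextA true h := if_pos hb
      have s11 : sentW P true true h = P.nextA true h := if_pos hb
      by_cases heq : P.nextA false h = P.nextA true h
      · refine ⟨h ++ [P.nextA false h], by simp [hlen], ?_⟩
        rw [cnt_append, cnt_append, cnt_append, cnt_append,
          s00, s01, s10, s11, if_pos rfl, if_pos heq.symm]
        simp only [Nat.add_zero]
        push_cast at hPhi ⊢
        exact Phi_mono (by omega) hPhi
      · rcases stepA hle hPhi with H | H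
        · -- corrupt x = true worlds: received symbol is Alice-with-false's symbol
          refine ⟨h ++ [P.nextA false h], by simp [hlen], ?_⟩
          rw [cnt_append, cnt_append, cnt_append, cnt_append,
            s00, s01, s10, s11, if_pos rfl, if_neg (fun hh => heq hh.symm)]
          simp only [Nat.add_zero, ecast]
          push_cast at H ⊢
          exact H
        · refine ⟨h ++ [P.nextA true h], by simp [hlen], ?_⟩
          rw [cnt_append, cnt_append, cnt_append, cnt_append,
            s00, s01, s10, s11, if_pos rfl, if_neg heq]
          simp only [Nat.add_zero, ecast]
          push_cast at H ⊢
          exact H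
    · -- Bob speaks
      have s00 : sentW P false false h = P.nextB false h := if_neg hb
      have s01 : sentW P false true h = P.nextB true h := if_neg hb
      have s10 : sentW P true false h = P.nextB false h := if_neg hb
      have s11 : sentW P true true h = P.nextB true h := if_neg hb
      by_cases heq : P.nextB false h = P.nextB true h
      · refine ⟨h ++ [P.nextB false h], by simp [hlen], ?_⟩
        rw [cnt_append, cnt_append, cnt_append, cnt_append,
          s00, s01, s10, s11, if_pos rfl, if_pos heq.symm]
        simp only [Nat.add_zero]
        push_cast at hPhi ⊢
        exact Phi_mono (by omega) hPhi
      · rcases stepB hle hPhi with H | H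
        · -- corrupt y = true worlds
          refine ⟨h ++ [P.nextB false h], by simp [hlen], ?_⟩
          rw [cnt_append, cnt_append, cnt_append, cnt_append,
            s00, s01, s10, s11, if_pos rfl, if_neg (fun hh => heq hh.symm)]
          simp only [Nat.add_zero, ecast]
          push_cast at H ⊢
          exact H
        · refine ⟨h ++ [P.nextB true h], by simp [hlen], ?_⟩
          rw [cnt_append, cnt_append, cnt_append, cnt_append,
            s00, s01, s10, s11, if_pos rfl, if_neg heq]
          simp only [Nat.add_zero, ecast]
          push_cast at H ⊢
          exact H


end FbAux

/-- For every finite alphabet Γ and every deterministic robust feedback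
protocol of length N over Γ (arbitrary, possibly noise-dependent order of speaking),
in which Alice holds x ∈ {0,1}, Bob holds y ∈ {0,1}, and both parties must output
the pair (x,y): there exist an input pair (x,y) and a noise pattern with at most
⌈N/3⌉ corrupted rounds under which some party's output differs from (x,y). -/
theorem feedback_arbitrary_order_impossibility_third
    (Γ : Type) [Fintype Γ] [DecidableEq Γ] [Nonempty Γ] (N : ℕ)
    (P : FeedbackProtocol Γ Bool Bool (Bool × Bool) N) :
    ∃ (x y : Bool) (r : Fin N → Γ),
      P.corruptions x y r ≤ ⌈(N : ℚ) / 3⌉₊ ∧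
      (P.outA x (List.ofFn r) ≠ (x, y) ∨ P.outB y (List.ofFn r) ≠ (x, y)) := by
  classical
  set K := ⌈(N : ℚ) / 3⌉₊ with hKdef
  have hK3 : N ≤ 3 * K := by
    have h1 := Nat.le_ceil ((N : ℚ) / 3)
    rw [div_le_iff₀ (by norm_num : (0:ℚ) < 3)] at h1
    have h2 : (N : ℚ) ≤ (3 * K : ℕ) := by push_cast; linarith
    exact_mod_cast h2
  obtain ⟨h, hlen, hPhi⟩ := FbAux.build P K (by omega) N le_rfl
  rw [sub_self] at hPhi
  have hr : ∃ r : Fin N → Γ, List.ofFn r = h := by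
    refine ⟨fun i => h.get (Fin.cast hlen.symm i), ?_⟩
    apply List.ext_getElem (by simp [hlen])
    intro i h1 h2
    simp [List.getElem_ofFn, List.get_eq_getElem]
  obtain ⟨r, hofn⟩ := hr
  have hcor : ∀ x y : Bool, P.corruptions x y r = FbAux.cnt P x y h := by
    intro x y
    rw [FbAux.corruptions_eq, hofn]
  rcases hPhi with ⟨h1, h2, _⟩ | ⟨h1, h2, _⟩ | ⟨h1, h2, _⟩ | ⟨h1, h2, _⟩
  · -- worlds (false,false) and (false,true): Alice x = false cannot be right in both
    by_cases hout : P.outA false h = (false, false)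
    · refine ⟨false, true, r, by rw [hcor]; omega, Or.inl ?_⟩
      rw [hofn, hout]; simp
    · exact ⟨false, false, r, by rw [hcor]; omega, Or.inl (by rw [hofn]; exact hout)⟩
  · -- worlds (true,false) and (true,true): Alice x = true
    by_cases hout : P.outA true h = (true, false)
    · refine ⟨true, true, r, by rw [hcor]; omega, Or.inl ?_⟩
      rw [hofn, hout]; simp
    · exact ⟨true, false, r, by rw [hcor]; omega, Or.inl (by rw [hofn]; exact hout)⟩
  · -- worlds (false,false) and (true,false): Bob y = false
    by_cases hout : P.outB false h = (false, false)
    · refine ⟨true, false, r, by rw [hcor]; omega, Or.inr ?_⟩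
      rw [hofn, hout]; simp
    · exact ⟨false, false, r, by rw [hcor]; omega, Or.inr (by rw [hofn]; exact hout)⟩
  · -- worlds (false,true) and (true,true): Bob y = true
    by_cases hout : P.outB true h = (false, true)
    · refine ⟨true, true, r, by rw [hcor]; omega, Or.inr ?_⟩
      rw [hofn, hout]; simp
    · exact ⟨false, true, r, by rw [hcor]; omega, Or.inr (by rw [hofn]; exact hout)⟩
end

section
/- For every deterministic interactive protocol with noiseless feedback of length N over the binary alphabet {0,1}, with a fixed order of speaking, in which Alice holds x from a set X with |X| ≥ 3, Bob holds y from a set Y with |Y| ≥ 3, and both parties are required to output the pair (x,y): there exist an input pair (x,y) and a noise pattern with at most ⌈N/6⌉ corrupted rounds (bit flips) under which some party's output differs from (x,y). -/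
namespace FBAux

/-- Number of corrupted positions for candidate `j` along received string `h`. -/
def cnt (B : Fin 3 → List Bool → Bool) (h : List Bool) (j : Fin 3) : ℕ :=
  ((Finset.range h.length).filter fun i => B j (h.take i) ≠ h.getD i false).card

lemma cnt_nil (B : Fin 3 → List Bool → Bool) (j : Fin 3) : cnt B [] j = 0 := by
  simp [cnt]

lemma cnt_append (B : Fin 3 → List Bool → Bool) (h : List Bool) (r : Bool) (j : Fin 3) :
    cnt B (h ++ [r]) j = cnt B h j + (if B j h = r then 0 else 1) := by
  unfold cnt
  have hl : (h ++ [r]).length = h.length + 1 := by simp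
  have hfe : (Finset.range h.length).filter
        (fun i => B j ((h ++ [r]).take i) ≠ (h ++ [r]).getD i false)
      = (Finset.range h.length).filter (fun i => B j (h.take i) ≠ h.getD i false) := by
    apply Finset.filter_congr
    intro i hi
    rw [Finset.mem_range] at hi
    rw [List.take_append_of_le_length hi.le]
    unfold List.getD
    rw [List.getElem?_append_left hi]
  have htake : (h ++ [r]).take h.length = h := List.take_left
  have hget : (h ++ [r]).getD h.length false = r := by
    unfold List.getD
    rw [List.getElem?_concat_length]
    rfl
  rw [hl, Finset.range_add_one, Finset.filter_insert, hfe, htake, hget]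
  by_cases hb : B j h = r
  · simp [hb]
  · simp [hb, Finset.card_insert_of_notMem]

/-- The adversary's invariant: there is a triple of distinct candidates, with the two
"protected" ones having counters `≤ t`, and enough budget for the `k` remaining
active rounds. -/
def Inv (t : ℕ) (c : Fin 3 → ℕ) (k : ℕ) : Prop :=
  ∃ i j l : Fin 3, i ≠ j ∧ i ≠ l ∧ j ≠ l ∧ c i ≤ t ∧ c j ≤ t ∧
    k + c i + c j ≤ 2 * t + (t + 1 - c l)

instance (t : ℕ) (c : Fin 3 → ℕ) (k : ℕ) : Decidable (Inv t c k) := by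
  unfold Inv; infer_instance

def upd (c : Fin 3 → ℕ) (b : Fin 3 → Bool) (r : Bool) : Fin 3 → ℕ :=
  fun j => c j + (if b j = r then 0 else 1)

lemma step (t k : ℕ) (c : Fin 3 → ℕ) (b : Fin 3 → Bool) (h : Inv t c (k + 1)) :
    Inv t (upd c b true) k ∨ Inv t (upd c b false) k := by
  obtain ⟨i, j, l, hij, hil, hjl, hci, hcj, hk⟩ := h
  cases hbi : b i <;> cases hbj : b j <;> cases hbl : b l
  -- b i = false, b j = false, b l = false : send false
  · exact Or.inr ⟨i, j, l, hij, hil, hjl, by simp [upd, hbi]; omega,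
      by simp [upd, hbj]; omega, by simp [upd, hbi, hbj, hbl]; omega⟩
  -- b i = false, b j = false, b l = true : send false
  · exact Or.inr ⟨i, j, l, hij, hil, hjl, by simp [upd, hbi]; omega,
      by simp [upd, hbj]; omega, by simp [upd, hbi, hbj, hbl]; omega⟩
  -- b i = false, b j = true, b l = false : b l = b i
  · rcases Nat.lt_or_ge (c j) t with h1 | h1
    · -- send b i = false: only c j increments
      exact Or.inr ⟨i, j, l, hij, hil, hjl, by simp [upd, hbi]; omega,
        by simp [upd, hbj]; omega, by simp [upd, hbi, hbj, hbl]; omega⟩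
    · rcases Nat.lt_or_ge t (c l) with h2 | h2
      · -- c l > t: send b j = true: c i and c l increment
        exact Or.inl ⟨i, j, l, hij, hil, hjl, by simp [upd, hbi]; omega,
          by simp [upd, hbj]; omega, by simp [upd, hbi, hbj, hbl]; omega⟩
      · -- c j = t, c l ≤ t: send b i = false, protect (i, l)
        exact Or.inr ⟨i, l, j, hil, hij, hjl.symm, by simp [upd, hbi]; omega,
          by simp [upd, hbl]; omega, by simp [upd, hbi, hbj, hbl]; omega⟩
  -- b i = false, b j = true, b l = true : b l = b j
  · rcases Nat.lt_or_ge (c i) t with h1 | h1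
    · -- send b j = true: only c i increments
      exact Or.inl ⟨i, j, l, hij, hil, hjl, by simp [upd, hbi]; omega,
        by simp [upd, hbj]; omega, by simp [upd, hbi, hbj, hbl]; omega⟩
    · rcases Nat.lt_or_ge t (c l) with h2 | h2
      · -- c l > t: send b i = false: c j and c l increment
        exact Or.inr ⟨i, j, l, hij, hil, hjl, by simp [upd, hbi]; omega,
          by simp [upd, hbj]; omega, by simp [upd, hbi, hbj, hbl]; omega⟩
      · -- c i = t, c l ≤ t: send b j = true, protect (j, l)
        exact Or.inl ⟨j, l, i, hjl, hij.symm, hil.symm, by simp [upd, hbj]; omega,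
          by simp [upd, hbl]; omega, by simp [upd, hbi, hbj, hbl]; omega⟩
  -- b i = true, b j = false, b l = false : b l = b j
  · rcases Nat.lt_or_ge (c i) t with h1 | h1
    · -- send b j = false: only c i increments
      exact Or.inr ⟨i, j, l, hij, hil, hjl, by simp [upd, hbi]; omega,
        by simp [upd, hbj]; omega, by simp [upd, hbi, hbj, hbl]; omega⟩
    · rcases Nat.lt_or_ge t (c l) with h2 | h2
      · -- c l > t: send b i = true: c j and c l increment
        exact Or.inl ⟨i, j, l, hij, hil, hjl, by simp [upd, hbi]; omega,
          by simp [upd, hbj]; omega, by simp [upd, hbi, hbj, hbl]; omega⟩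
      · -- c i = t, c l ≤ t: send b j = false, protect (j, l)
        exact Or.inr ⟨j, l, i, hjl, hij.symm, hil.symm, by simp [upd, hbj]; omega,
          by simp [upd, hbl]; omega, by simp [upd, hbi, hbj, hbl]; omega⟩
  -- b i = true, b j = false, b l = true : b l = b i
  · rcases Nat.lt_or_ge (c j) t with h1 | h1
    · -- send b i = true: only c j increments
      exact Or.inl ⟨i, j, l, hij, hil, hjl, by simp [upd, hbi]; omega,
        by simp [upd, hbj]; omega, by simp [upd, hbi, hbj, hbl]; omega⟩
    · rcases Nat.lt_or_ge t (c l) with h2 | h2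
      · -- c l > t: send b j = false: c i and c l increment
        exact Or.inr ⟨i, j, l, hij, hil, hjl, by simp [upd, hbi]; omega,
          by simp [upd, hbj]; omega, by simp [upd, hbi, hbj, hbl]; omega⟩
      · -- c j = t, c l ≤ t: send b i = true, protect (i, l)
        exact Or.inl ⟨i, l, j, hil, hij, hjl.symm, by simp [upd, hbi]; omega,
          by simp [upd, hbl]; omega, by simp [upd, hbi, hbj, hbl]; omega⟩
  -- b i = true, b j = true, b l = false : send true
  · exact Or.inl ⟨i, j, l, hij, hil, hjl, by simp [upd, hbi]; omega,
      by simp [upd, hbj]; omega, by simp [upd, hbi, hbj, hbl]; omega⟩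
  -- b i = true, b j = true, b l = true : send true
  · exact Or.inl ⟨i, j, l, hij, hil, hjl, by simp [upd, hbi]; omega,
      by simp [upd, hbj]; omega, by simp [upd, hbi, hbj, hbl]; omega⟩

/-- Number of "active" rounds (where the targeted party speaks) among rounds `n, …, N-1`. -/
def kRem (o : ℕ → Bool) (N n : ℕ) : ℕ :=
  ((Finset.Ico n N).filter fun i => o i = true).card

lemma kRem_succ (o : ℕ → Bool) (N n : ℕ) (hn : n < N) :
    kRem o N n = kRem o N (n + 1) + (if o n then 1 else 0) := by
  unfold kRem
  rw [← Finset.insert_Ico_add_one_left_eq_Ico hn, Finset.filter_insert]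
  by_cases ho : o n
  · rw [if_pos (by simp [ho]), if_pos ho,
      Finset.card_insert_of_notMem (by simp)]
  · rw [if_neg (by simp [ho]), if_neg ho]; rfl

lemma kRem_self (o : ℕ → Bool) (N : ℕ) : kRem o N N = 0 := by simp [kRem]

/-- The adversary's next received bit after prefix `h`. -/
def pick (t : ℕ) (B : Fin 3 → List Bool → Bool) (o : ℕ → Bool) (N : ℕ) (h : List Bool) : Bool :=
  decide (Inv t (cnt B (h ++ [true])) (kRem o N (h.length + 1)))

/-- Extend the prefix `h` by `m` adversarially chosen bits. -/
def build (t : ℕ) (B : Fin 3 → List Bool → Bool) (o : ℕ → Bool) (N : ℕ) :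
    ℕ → List Bool → List Bool
  | 0, h => h
  | m + 1, h => build t B o N m (h ++ [pick t B o N h])

lemma build_length (t : ℕ) (B : Fin 3 → List Bool → Bool) (o : ℕ → Bool) (N : ℕ) :
    ∀ m h, (build t B o N m h).length = h.length + m := by
  intro m
  induction m with
  | zero => intro h; simp [build]
  | succ m ih => intro h; rw [build, ih]; simp; omega

lemma pick_spec (t : ℕ) (B : Fin 3 → List Bool → Bool) (o : ℕ → Bool) (N : ℕ)
    (h : List Bool)
    (H : Inv t (cnt B (h ++ [true])) (kRem o N (h.length + 1)) ∨
         Inv t (cnt B (h ++ [false])) (kRem o N (h.length + 1))) :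
    Inv t (cnt B (h ++ [pick t B o N h])) (kRem o N (h.length + 1)) := by
  unfold pick
  by_cases hI : Inv t (cnt B (h ++ [true])) (kRem o N (h.length + 1))
  · rw [decide_eq_true hI]; exact hI
  · rw [decide_eq_false hI]; exact H.resolve_left hI

lemma step_build (t : ℕ) (B : Fin 3 → List Bool → Bool) (o : ℕ → Bool) (N : ℕ)
    (hB : ∀ h : List Bool, o h.length = false → ∀ j j' : Fin 3, B j h = B j' h)
    (h : List Bool) (hlen : h.length < N)
    (hinv : Inv t (cnt B h) (kRem o N h.length)) :
    Inv t (cnt B (h ++ [pick t B o N h])) (kRem o N (h.length + 1)) := by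
  have hcnt : ∀ r : Bool, cnt B (h ++ [r]) = upd (cnt B h) (fun j => B j h) r := by
    intro r; funext j; rw [cnt_append]; rfl
  apply pick_spec
  cases ho : o h.length with
  | true =>
    have hkeq : kRem o N h.length = kRem o N (h.length + 1) + 1 := by
      rw [kRem_succ o N h.length hlen, ho]; simp
    rw [hkeq] at hinv
    have := step t (kRem o N (h.length + 1)) (cnt B h) (fun j => B j h) hinv
    rw [hcnt true, hcnt false]
    exact this
  | false =>
    have hkeq : kRem o N h.length = kRem o N (h.length + 1) := by
      rw [kRem_succ o N h.length hlen, ho]; simp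
    rw [hkeq] at hinv
    have hbe : ∀ j : Fin 3, B j h = B 0 h := fun j => hB h ho j 0
    cases hb0 : B 0 h with
    | true =>
      left
      have : cnt B (h ++ [true]) = cnt B h := by
        rw [hcnt true]; funext j; simp [upd, hbe j, hb0]
      rw [this]; exact hinv
    | false =>
      right
      have : cnt B (h ++ [false]) = cnt B h := by
        rw [hcnt false]; funext j; simp [upd, hbe j, hb0]
      rw [this]; exact hinv

lemma build_inv (t : ℕ) (B : Fin 3 → List Bool → Bool) (o : ℕ → Bool) (N : ℕ)
    (hB : ∀ h : List Bool, o h.length = false → ∀ j j' : Fin 3, B j h = B j' h) :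
    ∀ m (h : List Bool), h.length + m = N →
      Inv t (cnt B h) (kRem o N h.length) →
      Inv t (cnt B (build t B o N m h)) 0 := by
  intro m
  induction m with
  | zero =>
    intro h he hi
    have : h.length = N := by omega
    rw [build]
    rw [this, kRem_self] at hi
    exact hi
  | succ m ih =>
    intro h he hi
    rw [build]
    apply ih
    · simp; omega
    · have := step_build t B o N hB h (by omega) hi
      simpa using this

/-- Core adversary lemma: if the targeted party speaks at most `3t` rounds, the
adversary finds a full received string under which two distinct candidates each
suffer at most `t` corruptions. -/
lemma core (t N : ℕ) (B : Fin 3 → List Bool → Bool) (o : ℕ → Bool)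
    (hB : ∀ h : List Bool, o h.length = false → ∀ j j' : Fin 3, B j h = B j' h)
    (ha : kRem o N 0 ≤ 3 * t) :
    ∃ rl : List Bool, rl.length = N ∧ ∃ j1 j2 : Fin 3, j1 ≠ j2 ∧
      cnt B rl j1 ≤ t ∧ cnt B rl j2 ≤ t := by
  have h0 : Inv t (cnt B []) (kRem o N 0) := by
    refine ⟨0, 1, 2, by decide, by decide, by decide, ?_, ?_, ?_⟩ <;>
      simp [cnt_nil] <;> omega
  have hinv := build_inv t B o N hB N [] (by simp) (by simpa using h0)
  refine ⟨build t B o N N [], by simp [build_length], ?_⟩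
  obtain ⟨i, j, l, hij, -, -, hi, hj, -⟩ := hinv
  exact ⟨i, j, hij, hi, hj⟩

lemma cnt_eq_card_fin (B : Fin 3 → List Bool → Bool) (N : ℕ) (r : Fin N → Bool) (j : Fin 3) :
    cnt B (List.ofFn r) j =
      (Finset.univ.filter fun i : Fin N =>
        B j ((List.ofFn r).take i.val) ≠ r i).card := by
  unfold cnt
  rw [Finset.card_filter, Finset.card_filter, List.length_ofFn]
  rw [← Fin.sum_univ_eq_sum_range
    (fun n => if B j ((List.ofFn r).take n) ≠ (List.ofFn r).getD n false then 1 else 0) N]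
  apply Finset.sum_congr rfl
  intro i _
  have hget : (List.ofFn r).getD i.val false = r i := by
    rw [List.getD_eq_getElem (List.ofFn r) false (by simp [i.isLt])]
    simp
  rw [hget]

end FBAux

/-- For every deterministic feedback protocol of length N over the binary
alphabet with a fixed order of speaking, with Alice's input from a set X with |X| ≥ 3
and Bob's input from a set Y with |Y| ≥ 3, where both parties must output the
pair (x,y): there exist an input pair (x,y) and a noise pattern with at most ⌈N/6⌉
corrupted rounds (bit flips) under which some party's output differs from (x,y). -/
theorem feedback_fixed_order_binary_impossibility_sixth
    (X Y : Type) (fX : Fin 3 → X) (hfX : Function.Injective fX)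
    (fY : Fin 3 → Y) (hfY : Function.Injective fY) (N : ℕ)
    (P : FeedbackProtocol Bool X Y (X × Y) N)
    (hfix : P.FixedOrder) :
    ∃ (x : X) (y : Y) (r : Fin N → Bool),
      P.corruptions x y r ≤ ⌈(N : ℚ) / 6⌉₊ ∧
      (P.outA x (List.ofFn r) ≠ (x, y) ∨ P.outB y (List.ofFn r) ≠ (x, y)) := by
  classical
  set t := ⌈(N : ℚ) / 6⌉₊ with ht
  have hN6 : N ≤ 6 * t := by
    have h1 : (N : ℚ) / 6 ≤ t := Nat.le_ceil _
    have h2 : (N : ℚ) ≤ 6 * t := by linarith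
    exact_mod_cast h2
  have hord : ∀ h : List Bool, P.ord h = (fun n => P.ord (List.replicate n false)) h.length :=
    fun h => hfix h (List.replicate h.length false) (by simp)
  set o : ℕ → Bool := fun n => P.ord (List.replicate n false) with hodef
  have haN : FBAux.kRem o N 0 + FBAux.kRem (fun n => !o n) N 0 = N := by
    unfold FBAux.kRem
    have h1 : (Finset.Ico 0 N).filter (fun i => (!o i) = true)
        = (Finset.Ico 0 N).filter (fun i => ¬ (o i = true)) := by
      apply Finset.filter_congr; intro i _; simp
    rw [h1, Finset.card_filter_add_card_filter_not]
    simp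
  by_cases hcase : FBAux.kRem o N 0 ≤ 3 * t
  · -- Alice speaks at most 3t rounds: fool Bob about Alice's input
    set y0 := fY 0 with hy0
    set B : Fin 3 → List Bool → Bool :=
      fun j h => if P.ord h then P.nextA (fX j) h else P.nextB y0 h with hBdef
    have hB : ∀ h : List Bool, o h.length = false → ∀ j j' : Fin 3, B j h = B j' h := by
      intro h hh j j'
      simp only [hBdef]
      rw [hord h]
      simp only [← hodef, hh]
      simp
    obtain ⟨rl, hlen, j1, j2, hj12, hc1, hc2⟩ := FBAux.core t N B o hB hcase
    subst hlen
    have hofn : List.ofFn rl.get = rl := List.ofFn_get rl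
    have hcorr : ∀ j : Fin 3, P.corruptions (fX j) y0 rl.get = FBAux.cnt B rl j := by
      intro j
      have h2 : FBAux.cnt B (List.ofFn rl.get) j = FBAux.cnt B rl j := by rw [hofn]
      rw [← h2, FBAux.cnt_eq_card_fin]
      rfl
    by_cases hout : P.outB y0 (List.ofFn rl.get) = (fX j1, y0)
    · refine ⟨fX j2, y0, rl.get, ?_, Or.inr ?_⟩
      · rw [hcorr j2]; exact hc2
      · intro heq
        rw [hout] at heq
        exact hj12 (hfX (congrArg Prod.fst heq))
    · exact ⟨fX j1, y0, rl.get, by rw [hcorr j1]; exact hc1, Or.inr hout⟩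
  · -- Bob speaks at most 3t rounds: fool Alice about Bob's input
    have hcase' : FBAux.kRem (fun n => !o n) N 0 ≤ 3 * t := by omega
    set x0 := fX 0 with hx0
    set B : Fin 3 → List Bool → Bool :=
      fun j h => if P.ord h then P.nextA x0 h else P.nextB (fY j) h with hBdef
    have hB : ∀ h : List Bool, (fun n => !o n) h.length = false →
        ∀ j j' : Fin 3, B j h = B j' h := by
      intro h hh j j'
      simp only [Bool.not_eq_false'] at hh
      simp only [hBdef]
      rw [hord h]
      simp only [← hodef, hh]
      simp
    obtain ⟨rl, hlen, j1, j2, hj12, hc1, hc2⟩ := FBAux.core t N B (fun n => !o n) hB hcase'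
    subst hlen
    have hofn : List.ofFn rl.get = rl := List.ofFn_get rl
    have hcorr : ∀ j : Fin 3, P.corruptions x0 (fY j) rl.get = FBAux.cnt B rl j := by
      intro j
      have h2 : FBAux.cnt B (List.ofFn rl.get) j = FBAux.cnt B rl j := by rw [hofn]
      rw [← h2, FBAux.cnt_eq_card_fin]
      rfl
    by_cases hout : P.outA x0 (List.ofFn rl.get) = (x0, fY j1)
    · refine ⟨x0, fY j2, rl.get, ?_, Or.inl ?_⟩
      · rw [hcorr j2]; exact hc2
      · intro heq
        rw [hout] at heq
        exact hj12 (hfY (congrArg Prod.snd heq))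
    · exact ⟨x0, fY j1, rl.get, by rw [hcorr j1]; exact hc1, Or.inl hout⟩
end

section
/- For every ε with 0 < ε < 1/2 and every noiseless alternating binary protocol π of length n, there exists a deterministic interactive protocol Π over an erasure channel with an alphabet of size 6, with a fixed alternating order of speaking, of length N ≤ c·n/ε for an absolute constant c > 0, such that for every input pair (x,y) and every erasure pattern E with |E| ≤ (1/2 − ε)·N, both parties output the transcript π(x,y). -/
/-- A deterministic interactive protocol of length `N` over an erasure channel with
alphabet `Γ` and a fixed order of speaking: `ord i = true` means Alice is the sender
of round `i`. A view item is `some s` for a symbol the party sent or received intact,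
and `none` for an erased reception. There is no feedback: the sender does not learn
whether its transmission was erased. Each party's next symbol and final output are
functions of its input and its own view. -/
structure ErasureProtocol (Γ X Y O : Type) (N : ℕ) where
  ord : Fin N → Bool
  nextA : X → List (Option Γ) → Γ
  nextB : Y → List (Option Γ) → Γ
  outA : X → List (Option Γ) → O
  outB : Y → List (Option Γ) → O

/-- The pair (Alice's view, Bob's view) after the first `i` rounds of the execution on
inputs `x, y` with erasure pattern `E`: the sender appends its sent symbol to its view;
the receiver appends `none` if the round is erased and the sent symbol otherwise. -/
def ErasureProtocol.views {Γ X Y O : Type} {N : ℕ} (P : ErasureProtocol Γ X Y O N)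
    (x : X) (y : Y) (E : Finset (Fin N)) : ℕ → List (Option Γ) × List (Option Γ)
  | 0 => ([], [])
  | i+1 =>
    let v := P.views x y E i
    if h : i < N then
      if P.ord ⟨i, h⟩ then
        let s := P.nextA x v.1
        (v.1 ++ [some s], v.2 ++ [if (⟨i, h⟩ : Fin N) ∈ E then none else some s])
      else
        let s := P.nextB y v.2
        (v.1 ++ [if (⟨i, h⟩ : Fin N) ∈ E then none else some s], v.2 ++ [some s])
    else v

-- [defs from a.lean]
def enc6 (p : Bool × Fin 3) : Fin 6 :=
  ⟨(cond p.1 3 0) + p.2.val, by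
    obtain ⟨b, t⟩ := p; have := t.isLt; cases b <;> simp <;> omega⟩

def dec6 (s : Fin 6) : Bool × Fin 3 :=
  (decide (3 ≤ s.val), ⟨s.val % 3, Nat.mod_lt _ (by norm_num)⟩)

lemma dec6_enc6 : ∀ p : Bool × Fin 3, dec6 (enc6 p) = p := by decide

def upd (f : List Bool → Bool) (T : List Bool) (o : Option (Fin 6)) : List Bool :=
  match o with
  | none => T
  | some s =>
    if (dec6 s).2.val = T.length % 3 then
      (T ++ [(dec6 s).1]) ++ [f (T ++ [(dec6 s).1])]
    else T

def stepF (f : List Bool → Bool) (rp : ℕ) (p : List Bool × ℕ) (o : Option (Fin 6)) :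
    List Bool × ℕ :=
  (if p.2 % 2 = rp then upd f p.1 o else p.1, p.2 + 1)

def stateOf (f : List Bool → Bool) (rp : ℕ) (T0 : List Bool)
    (v : List (Option (Fin 6))) : List Bool :=
  (v.foldl (stepF f rp) (T0, 0)).1

lemma stepF_snd (f : List Bool → Bool) (rp : ℕ) :
    ∀ (v : List (Option (Fin 6))) (p : List Bool × ℕ),
      (List.foldl (stepF f rp) p v).2 = p.2 + v.length := by
  intro v
  induction v with
  | nil => simp
  | cons o v ih => intro p; simp [List.foldl_cons, ih, stepF]; omega

lemma stateOf_concat (f : List Bool → Bool) (rp : ℕ) (T0 : List Bool)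
    (v : List (Option (Fin 6))) (o : Option (Fin 6)) :
    stateOf f rp T0 (v ++ [o]) =
      if v.length % 2 = rp then upd f (stateOf f rp T0 v) o
      else stateOf f rp T0 v := by
  unfold stateOf
  rw [List.foldl_append]
  have h2 := stepF_snd f rp v (T0, 0)
  simp only [List.foldl_cons, List.foldl_nil, stepF, h2]
  simp

def sendSym (T : List Bool) : Fin 6 :=
  enc6 (T.getLastD false, ⟨(T.length + 2) % 3, Nat.mod_lt _ (by norm_num)⟩)

def stA {X Y : Type} (pr : AltProtocol X Y) (x : X) (v : List (Option (Fin 6))) :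
    List Bool :=
  stateOf (fun T => pr.nextA x T) 1 [pr.nextA x []] v

def stB {X Y : Type} (pr : AltProtocol X Y) (y : Y) (v : List (Option (Fin 6))) :
    List Bool :=
  stateOf (fun T => pr.nextB y T) 0 [] v

lemma transcript_length {X Y : Type} (pr : AltProtocol X Y) (x : X) (y : Y) :
    ∀ k, (pr.transcript x y k).length = k := by
  intro k
  induction k with
  | zero => rfl
  | succ k ih => simp [AltProtocol.transcript, ih]

lemma transcript_succ {X Y : Type} (pr : AltProtocol X Y) (x : X) (y : Y) (k : ℕ) :
    pr.transcript x y (k+1) = pr.transcript x y k ++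
      [if k % 2 = 0 then pr.nextA x (pr.transcript x y k)
       else pr.nextB y (pr.transcript x y k)] := by
  simp [AltProtocol.transcript, transcript_length]

lemma transcript_take {X Y : Type} (pr : AltProtocol X Y) (x : X) (y : Y)
    {n m : ℕ} (h : n ≤ m) : (pr.transcript x y m).take n = pr.transcript x y n := by
  induction m with
  | zero =>
    have : n = 0 := Nat.le_zero.mp h
    subst this; rfl
  | succ m ih =>
    rcases Nat.lt_or_ge n (m+1) with h' | h'
    · rw [transcript_succ, List.take_append_of_le_length (by
        rw [transcript_length]; omega), ih (by omega)]
    · have : n = m + 1 := by omega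
      subst this
      exact List.take_of_length_le (by rw [transcript_length])


def EP {X Y : Type} (pr : AltProtocol X Y) (n N : ℕ) :
    ErasureProtocol (Fin 6) X Y (List Bool) N where
  ord i := decide (i.val % 2 = 0)
  nextA x v := sendSym (stA pr x v)
  nextB y v := sendSym (stB pr y v)
  outA x v := (stA pr x v).take n
  outB y v := (stB pr y v).take n

lemma views_len {X Y : Type} (pr : AltProtocol X Y) (n N : ℕ) (x : X) (y : Y)
    (E : Finset (Fin N)) : ∀ i, i ≤ N →
      ((EP pr n N).views x y E i).1.length = i ∧
      ((EP pr n N).views x y E i).2.length = i := by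
  intro i
  induction i with
  | zero => intro _; constructor <;> rfl
  | succ i ih =>
    intro h
    have hi : i < N := h
    obtain ⟨h1, h2⟩ := ih (le_of_lt hi)
    simp only [ErasureProtocol.views, dif_pos hi]
    split <;> simp [h1, h2]

lemma stA_init {X Y : Type} (pr : AltProtocol X Y) (x : X) (y : Y) :
    stA pr x [] = pr.transcript x y 1 := by
  simp [stA, stateOf, AltProtocol.transcript]


lemma recvB {X Y : Type} (pr : AltProtocol X Y) (x : X) (y : Y) (a b : ℕ)
    (hodd : a % 2 = 1) (heven : b % 2 = 0) (hab : a = b + 1 ∨ b = a + 1) :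
    upd (fun T => pr.nextB y T) (pr.transcript x y b)
        (some (sendSym (pr.transcript x y a))) =
      if b = a + 1 then pr.transcript x y b else pr.transcript x y (b+2) := by
  simp only [upd, sendSym, dec6_enc6, transcript_length]
  rcases hab with hab | hab
  · subst hab
    rw [if_pos (by omega), if_neg (by omega)]
    have hc : (pr.transcript x y (b+1)).getLastD false =
        (if b % 2 = 0 then pr.nextA x (pr.transcript x y b)
         else pr.nextB y (pr.transcript x y b)) := by
      rw [transcript_succ, List.getLastD_concat]
    have h1 : pr.transcript x y b ++ [(pr.transcript x y (b+1)).getLastD false]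
        = pr.transcript x y (b+1) := by
      rw [hc, transcript_succ]
    rw [h1]
    have h2 := transcript_succ pr x y (b+1)
    rw [if_neg (by omega)] at h2
    exact h2.symm
  · rw [if_neg (by omega), if_pos (by omega)]

lemma recvA {X Y : Type} (pr : AltProtocol X Y) (x : X) (y : Y) (a b : ℕ)
    (hodd : a % 2 = 1) (heven : b % 2 = 0) (hab : a = b + 1 ∨ b = a + 1) :
    upd (fun T => pr.nextA x T) (pr.transcript x y a)
        (some (sendSym (pr.transcript x y b))) =
      if a = b + 1 then pr.transcript x y a else pr.transcript x y (a+2) := by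
  simp only [upd, sendSym, dec6_enc6, transcript_length]
  rcases hab with hab | hab
  · rw [if_neg (by omega), if_pos (by omega)]
  · subst hab
    rw [if_pos (by omega), if_neg (by omega)]
    have hc : (pr.transcript x y (a+1)).getLastD false =
        (if a % 2 = 0 then pr.nextA x (pr.transcript x y a)
         else pr.nextB y (pr.transcript x y a)) := by
      rw [transcript_succ, List.getLastD_concat]
    have h1 : pr.transcript x y a ++ [(pr.transcript x y (a+1)).getLastD false]
        = pr.transcript x y (a+1) := by
      rw [hc, transcript_succ]
    rw [h1]
    have h2 := transcript_succ pr x y (a+1)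
    rw [if_pos (by omega)] at h2
    exact h2.symm

/-- The key one-step characterization. -/
lemma step_char {X Y : Type} (pr : AltProtocol X Y) (n N : ℕ) (x : X) (y : Y)
    (E : Finset (Fin N)) (i : ℕ) (h : i < N) (a b : ℕ)
    (ha : stA pr x ((EP pr n N).views x y E i).1 = pr.transcript x y a)
    (hb : stB pr y ((EP pr n N).views x y E i).2 = pr.transcript x y b)
    (hodd : a % 2 = 1) (heven : b % 2 = 0) (hab : a = b + 1 ∨ b = a + 1) :
    (stA pr x ((EP pr n N).views x y E (i+1)).1,
     stB pr y ((EP pr n N).views x y E (i+1)).2) =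
      if i % 2 = 0 then
        (pr.transcript x y a,
         if (⟨i, h⟩ : Fin N) ∈ E ∨ b = a + 1 then pr.transcript x y b
         else pr.transcript x y (b+2))
      else
        ((if (⟨i, h⟩ : Fin N) ∈ E ∨ a = b + 1 then pr.transcript x y a
          else pr.transcript x y (a+2)),
         pr.transcript x y b) := by
  obtain ⟨h1, h2⟩ := views_len pr n N x y E i (le_of_lt h)
  set v := (EP pr n N).views x y E i with hv
  by_cases hpar : i % 2 = 0
  · have hnx : (EP pr n N).nextA x v.1 = sendSym (pr.transcript x y a) := by
      show sendSym (stA pr x v.1) = _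
      rw [ha]
    have hview : (EP pr n N).views x y E (i+1) =
        (v.1 ++ [some (sendSym (pr.transcript x y a))],
         v.2 ++ [if (⟨i, h⟩ : Fin N) ∈ E then none
                 else some (sendSym (pr.transcript x y a))]) := by
      simp only [ErasureProtocol.views, dif_pos h]
      rw [show (EP pr n N).ord ⟨i, h⟩ = decide (i % 2 = 0) from rfl]
      simp [hpar, ← hv, hnx]
    rw [hview, if_pos hpar]
    have hA : stA pr x (v.1 ++ [some (sendSym (pr.transcript x y a))])
        = pr.transcript x y a := by
      rw [stA, stateOf_concat, h1, if_neg (by omega)]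
      exact ha
    have hB : stB pr y (v.2 ++ [if (⟨i, h⟩ : Fin N) ∈ E then none
        else some (sendSym (pr.transcript x y a))]) =
        (if (⟨i, h⟩ : Fin N) ∈ E ∨ b = a + 1 then pr.transcript x y b
         else pr.transcript x y (b+2)) := by
      rw [stB, stateOf_concat, h2, if_pos hpar]
      by_cases hm : (⟨i, h⟩ : Fin N) ∈ E
      · simp only [hm, if_pos, true_or, if_true]
        show upd _ (stB pr y v.2) none = _
        rw [hb]; rfl
      · simp only [hm, if_neg, false_or, if_false]
        show upd _ (stB pr y v.2) (some (sendSym (pr.transcript x y a))) = _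
        rw [hb, recvB pr x y a b hodd heven hab]
    rw [hA, hB]
  · have hnx : (EP pr n N).nextB y v.2 = sendSym (pr.transcript x y b) := by
      show sendSym (stB pr y v.2) = _
      rw [hb]
    have hview : (EP pr n N).views x y E (i+1) =
        (v.1 ++ [if (⟨i, h⟩ : Fin N) ∈ E then none
                 else some (sendSym (pr.transcript x y b))],
         v.2 ++ [some (sendSym (pr.transcript x y b))]) := by
      simp only [ErasureProtocol.views, dif_pos h]
      rw [show (EP pr n N).ord ⟨i, h⟩ = decide (i % 2 = 0) from rfl]
      simp [hpar, ← hv, hnx]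
    rw [hview, if_neg hpar]
    have hB : stB pr y (v.2 ++ [some (sendSym (pr.transcript x y b))])
        = pr.transcript x y b := by
      rw [stB, stateOf_concat, h2, if_neg hpar]
      exact hb
    have hA : stA pr x (v.1 ++ [if (⟨i, h⟩ : Fin N) ∈ E then none
        else some (sendSym (pr.transcript x y b))]) =
        (if (⟨i, h⟩ : Fin N) ∈ E ∨ a = b + 1 then pr.transcript x y a
         else pr.transcript x y (a+2)) := by
      rw [stA, stateOf_concat, h1, if_pos (by omega)]
      by_cases hm : (⟨i, h⟩ : Fin N) ∈ E
      · simp only [hm, true_or, if_true]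
        show upd _ (stA pr x v.1) none = _
        rw [ha]; rfl
      · simp only [hm, false_or, if_false]
        show upd _ (stA pr x v.1) (some (sendSym (pr.transcript x y b))) = _
        rw [ha, recvA pr x y a b hodd heven hab]
    rw [hA, hB]

lemma Fmono {N : ℕ} (E : Finset (Fin N)) {m m' : ℕ} (h : m ≤ m') :
    (E.filter (fun t => t.val < m)).card ≤ (E.filter (fun t => t.val < m')).card := by
  apply Finset.card_le_card
  intro t ht
  simp only [Finset.mem_filter] at *
  exact ⟨ht.1, lt_of_lt_of_le ht.2 h⟩

lemma Fbump {N : ℕ} (E : Finset (Fin N)) {m m' : ℕ} (e : Fin N) (he : e ∈ E)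
    (h1 : m ≤ e.val) (h2 : e.val < m') :
    (E.filter (fun t => t.val < m)).card + 1 ≤ (E.filter (fun t => t.val < m')).card := by
  have hnm : e ∉ E.filter (fun t => t.val < m) := by
    simp only [Finset.mem_filter]; omega
  have hsub : insert e (E.filter (fun t => t.val < m)) ⊆ E.filter (fun t => t.val < m') := by
    intro t ht
    simp only [Finset.mem_insert, Finset.mem_filter] at *
    rcases ht with rfl | ⟨ht1, ht2⟩
    · exact ⟨he, h2⟩
    · exact ⟨ht1, by omega⟩
  calc (E.filter (fun t => t.val < m)).card + 1
      = (insert e (E.filter (fun t => t.val < m))).card :=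
        (Finset.card_insert_of_notMem hnm).symm
    _ ≤ _ := Finset.card_le_card hsub

lemma main_inv {X Y : Type} (pr : AltProtocol X Y) (n N : ℕ) (x : X) (y : Y)
    (E : Finset (Fin N)) : ∀ j, 2*j ≤ N →
    ∃ a b : ℕ,
      stA pr x ((EP pr n N).views x y E (2*j)).1 = pr.transcript x y a ∧
      stB pr y ((EP pr n N).views x y E (2*j)).2 = pr.transcript x y b ∧
      a % 2 = 1 ∧ b % 2 = 0 ∧ (a = b + 1 ∨ b = a + 1) ∧
      2*j ≤ a + b + 2 * (E.filter (fun t => t.val < 2*j)).card := by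
  intro j
  induction j with
  | zero =>
    intro _
    refine ⟨1, 0, ?_, ?_, by omega, by omega, by omega, by omega⟩
    · show stA pr x ([] : List (Option (Fin 6))) = _
      simp [stA, stateOf, AltProtocol.transcript]
    · rfl
  | succ j ih =>
    intro hj
    have hj2 : 2*j ≤ N := by omega
    have h1 : 2*j < N := by omega
    have h2 : 2*j+1 < N := by omega
    obtain ⟨a, b, ha, hb, hodd, heven, hab, hpot⟩ := ih hj2
    -- step at 2j (Alice's round)
    have s1 := step_char pr n N x y E (2*j) h1 a b ha hb hodd heven hab
    rw [if_pos (by omega)] at s1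
    rw [Prod.mk.injEq] at s1
    obtain ⟨hA1, hB1⟩ := s1
    set b1 := if (⟨2*j, h1⟩ : Fin N) ∈ E ∨ b = a + 1 then b else b + 2 with hb1def
    have hB1' : stB pr y ((EP pr n N).views x y E (2*j+1)).2 = pr.transcript x y b1 := by
      rw [hB1, hb1def]; split <;> rfl
    have heven1 : b1 % 2 = 0 := by rw [hb1def]; split <;> omega
    have hab1 : a = b1 + 1 ∨ b1 = a + 1 := by
      rw [hb1def]; split
      · exact hab
      · rename_i hcond
        push_neg at hcond
        omega
    -- step at 2j+1 (Bob's round)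
    have s2 := step_char pr n N x y E (2*j+1) h2 a b1 hA1 hB1' hodd heven1 hab1
    rw [if_neg (by omega)] at s2
    rw [Prod.mk.injEq] at s2
    obtain ⟨hA2, hB2⟩ := s2
    set a2 := if (⟨2*j+1, h2⟩ : Fin N) ∈ E ∨ a = b1 + 1 then a else a + 2 with ha2def
    have hA2' : stA pr x ((EP pr n N).views x y E (2*j+2)).1 = pr.transcript x y a2 := by
      rw [show 2*j+2 = (2*j+1)+1 from rfl, hA2, ha2def]; split <;> rfl
    have hodd2 : a2 % 2 = 1 := by rw [ha2def]; split <;> omega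
    have hab2 : a2 = b1 + 1 ∨ b1 = a2 + 1 := by
      rw [ha2def]; split
      · exact hab1
      · rename_i hcond
        push_neg at hcond
        omega
    refine ⟨a2, b1, ?_, ?_, hodd2, heven1, hab2, ?_⟩
    · rw [show 2*(j+1) = (2*j+1)+1 from rfl]; exact hA2'
    · rw [show 2*(j+1) = (2*j+1)+1 from rfl, hB2]
    -- potential
    by_cases he1 : (⟨2*j, h1⟩ : Fin N) ∈ E
    · have hF := Fbump E (m := 2*j) (m' := 2*(j+1)) ⟨2*j, h1⟩ he1 (by simp) (by simp)
      have ha2ge : a2 ≥ a := by rw [ha2def]; split <;> omega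
      have hb1ge : b1 ≥ b := by rw [hb1def]; split <;> omega
      omega
    · by_cases he2 : (⟨2*j+1, h2⟩ : Fin N) ∈ E
      · have hF := Fbump E (m := 2*j) (m' := 2*(j+1)) ⟨2*j+1, h2⟩ he2 (by simp) (by simp; omega)
        have ha2ge : a2 ≥ a := by rw [ha2def]; split <;> omega
        have hb1ge : b1 ≥ b := by rw [hb1def]; split <;> omega
        omega
      · have hF := Fmono E (show 2*j ≤ 2*(j+1) by omega)
        rcases hab with hcase | hcase
        · have hb1eq : b1 = b + 2 := by rw [hb1def, if_neg]; push_neg; exact ⟨he1, by omega⟩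
          have ha2ge : a2 ≥ a := by rw [ha2def]; split <;> omega
          omega
        · have hb1eq : b1 = b := by rw [hb1def, if_pos (Or.inr hcase)]
          have ha2eq : a2 = a + 2 := by
            rw [ha2def, if_neg]; push_neg; exact ⟨he2, by omega⟩
          omega

/-- For every ε with 0 < ε < 1/2 and every noiseless alternating binary
protocol π of length n, there is a deterministic protocol over an erasure channel with
an alphabet of size 6, with a fixed alternating order of speaking, of length
N ≤ c·n/ε for an absolute constant c > 0, such that for every input pair (x,y) and
every erasure pattern E with |E| ≤ (1/2 − ε)·N, both parties output the transcript
π(x,y). -/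
theorem erasure_six_ary_half :
    ∃ c : ℝ, 0 < c ∧
      ∀ (X Y : Type) (pr : AltProtocol X Y) (n : ℕ) (ε : ℝ),
        0 < ε → ε < 1/2 →
        ∃ (N : ℕ) (P : ErasureProtocol (Fin 6) X Y (List Bool) N),
          (∀ i : Fin N, P.ord i = decide (i.val % 2 = 0)) ∧
          (N : ℝ) ≤ c * n / ε ∧
          ∀ (x : X) (y : Y) (E : Finset (Fin N)),
            (E.card : ℝ) ≤ (1/2 - ε) * N →
            P.outA x (P.views x y E N).1 = pr.transcript x y n ∧
            P.outB y (P.views x y E N).2 = pr.transcript x y n := by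
  refine ⟨4, by norm_num, ?_⟩
  intro X Y pr n ε hε hε2
  set m := Nat.ceil ((n:ℝ)/ε) with hm
  refine ⟨2*m, EP pr n (2*m), fun i => rfl, ?_, ?_⟩
  · -- length bound
    rcases Nat.eq_zero_or_pos n with hn | hn
    · subst hn
      have : m = 0 := by simp [hm]
      simp [this]
    · have hn1 : (1:ℝ) ≤ n := by exact_mod_cast hn
      have hc : (m:ℝ) < (n:ℝ)/ε + 1 := Nat.ceil_lt_add_one (by positivity)
      have ht2 : (2:ℝ) ≤ (n:ℝ)/ε := by
        rw [le_div_iff₀ hε]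
        nlinarith
      have hgoal : (4:ℝ) * n / ε = 4 * ((n:ℝ)/ε) := by ring
      rw [hgoal]
      push_cast
      nlinarith
  · intro x y E hEc
    obtain ⟨a, b, ha, hb, hodd, heven, hab, hpot⟩ :=
      main_inv pr n (2*m) x y E m (le_refl _)
    have hFle : (E.filter (fun t => t.val < 2*m)).card ≤ E.card :=
      Finset.card_le_card (Finset.filter_subset _ _)
    have hnat : 2*m ≤ a + b + 2 * E.card := by omega
    have hcast : (2*(m:ℝ)) ≤ (a:ℝ) + b + 2*E.card := by exact_mod_cast hnat
    have hεm : (n:ℝ) ≤ ε * m := by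
      have := Nat.le_ceil ((n:ℝ)/ε)
      rw [div_le_iff₀ hε] at this
      rw [← hm] at this
      linarith [this]
    have hEc' : (E.card : ℝ) ≤ (1/2 - ε) * (2*(m:ℝ)) := by
      have : ((2*m : ℕ) : ℝ) = 2*(m:ℝ) := by push_cast; ring
      rw [this] at hEc
      exact hEc
    have hab4 : (4:ℝ)*n ≤ (a:ℝ) + b := by nlinarith
    have hab4' : 4*n ≤ a + b := by exact_mod_cast hab4
    have hna : n ≤ a := by omega
    have hnb : n ≤ b := by omega
    constructor
    · show (stA pr x ((EP pr n (2*m)).views x y E (2*m)).1).take n = _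
      rw [ha, transcript_take pr x y hna]
    · show (stB pr y ((EP pr n (2*m)).views x y E (2*m)).2).take n = _
      rw [hb, transcript_take pr x y hnb]
end

section
/- For every ε with 0 < ε < 3/10 and every noiseless alternating binary protocol π of length n, there exists a deterministic interactive protocol Π over a binary erasure channel (alphabet {0,1}), with a fixed order of speaking, of length N ≤ c·n/ε for an absolute constant c > 0, such that for every input pair (x,y) and every erasure pattern E with |E| ≤ (3/10 − ε)·N, both parties output the transcript π(x,y). -/
namespace BEaux


def row : Fin 6 → List Bool
  | 0 => [true, true, true, true, true, true, true, true, true, true]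
  | 1 => [true, true, true, true, false, false, false, false, false, false]
  | 2 => [true, false, false, false, true, true, true, false, false, false]
  | 3 => [false, true, false, false, true, false, false, true, true, false]
  | 4 => [false, false, true, false, false, true, false, true, false, true]
  | 5 => [false, false, false, true, false, false, true, false, true, true]

def code (u : Fin 6) (j : Fin 10) : Bool :=
  (row u).getD j.val false

theorem code_dist : ∀ u v : Fin 6, u ≠ v →
    6 ≤ (Finset.univ.filter (fun j => code u j ≠ code v j)).card := by decide

def consistent (u : Fin 6) (w : List (Option Bool)) : Prop :=
  ∀ j : Fin 10, ∀ b : Bool, w.getD j.val none = some b → b = code u j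

noncomputable def decode (w : List (Option Bool)) : Option (Fin 6) :=
  letI := Classical.propDecidable (∃ u, consistent u w ∧ ∀ v, consistent v w → v = u)
  if h : ∃ u, consistent u w ∧ ∀ v, consistent v w → v = u then some h.choose else none

theorem decode_safe {u v : Fin 6} {w : List (Option Bool)} (hu : consistent u w)
    (h : decode w = some v) : v = u := by
  unfold decode at h
  split at h
  · rename_i hex
    obtain ⟨hc, huniq⟩ := hex.choose_spec
    have h1 : hex.choose = v := by injection h
    rw [← h1, ← huniq u hu]
  · exact absurd h (by simp)

theorem decode_complete {u : Fin 6} {w : List (Option Bool)}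
    (hw : ∀ j : Fin 10, w.getD j.val none = none ∨ w.getD j.val none = some (code u j))
    (hcard : (Finset.univ.filter (fun j : Fin 10 => w.getD j.val none = none)).card ≤ 5) :
    decode w = some u := by
  have hcons : consistent u w := by
    intro j b hj
    rcases hw j with h | h
    · rw [hj] at h; exact absurd h (by simp)
    · rw [hj] at h
      exact Option.some_injective _ h
  have huniq : ∀ v, consistent v w → v = u := by
    intro v hv
    by_contra hne
    have hsub : (Finset.univ.filter (fun j => code u j ≠ code v j)) ⊆
        (Finset.univ.filter (fun j : Fin 10 => w.getD j.val none = none)) := by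
      intro j hj
      simp only [Finset.mem_filter, Finset.mem_univ, true_and] at hj ⊢
      rcases hw j with h | h
      · exact h
      · exact absurd ((hcons j _ h).symm.trans (hv j _ h)) hj
    have := (code_dist u v (Ne.symm hne)).trans (Finset.card_le_card hsub)
    omega
  have hex : ∃ u, consistent u w ∧ ∀ v, consistent v w → v = u := ⟨u, hcons, huniq⟩
  unfold decode
  split
  · rename_i hex'
    exact congrArg some (huniq _ hex'.choose_spec.1)
  · rename_i hex'
    exact absurd hex hex' 

/-- One self-extension step: the party extends its prefix by a bit it can compute
itself, if it is its turn (`side = true` is Alice, who moves when the length is even). -/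
def stepP (side : Bool) (f : List Bool → Bool) (T : List Bool) : List Bool :=
  if decide (T.length % 2 = 0) = side then T ++ [f T] else T

def encS (r : ℕ) (b : Bool) : Fin 6 :=
  ⟨(r % 3) * 2 + (if b then 1 else 0), by
    have : r % 3 < 3 := Nat.mod_lt _ (by norm_num); split <;> omega⟩

def symOf (T : List Bool) : Fin 6 := encS (T.length % 3) (T.getLastD false)

/-- Block update: decode the received block; if it carries the next transcript bit
(sender length ≡ own length + 1 mod 3), append it and self-extend. -/
noncomputable def updP (side : Bool) (f : List Bool → Bool) (T : List Bool)
    (w : List (Option Bool)) : List Bool :=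
  match decode w with
  | some u => if u.val / 2 = (T.length + 1) % 3
              then stepP side f (T ++ [decide (u.val % 2 = 1)]) else T
  | none => T

/-- The party's prefix after `t` blocks, recomputed from its view `v`. -/
noncomputable def stateN (side : Bool) (f : List Bool → Bool) (v : List (Option Bool)) :
    ℕ → List Bool
  | 0 => stepP side f []
  | t+1 => if decide (t % 2 = 0) = side then stateN side f v t
           else updP side f (stateN side f v t) ((v.drop (10*t)).take 10)

theorem stateN_congr (side : Bool) (f : List Bool → Bool) {v₁ v₂ : List (Option Bool)}
    (t : ℕ) (h : v₁.take (10*t) = v₂.take (10*t)) :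
    stateN side f v₁ t = stateN side f v₂ t := by
  induction t with
  | zero => rfl
  | succ t ih =>
    have h' : v₁.take (10*t) = v₂.take (10*t) := by
      have : (v₁.take (10*(t+1))).take (10*t) = (v₂.take (10*(t+1))).take (10*t) := by rw [h]
      simpa [List.take_take, Nat.min_def, Nat.mul_le_mul_left] using this
    have hsl : (v₁.drop (10*t)).take 10 = (v₂.drop (10*t)).take 10 := by
      have e1 : ∀ v : List (Option Bool), (v.drop (10*t)).take 10 =
          (v.take (10*t+10)).drop (10*t) := by
        intro v
        rw [List.drop_take]
        congr 1
        omega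
      rw [e1, e1]
      have : v₁.take (10*t+10) = v₂.take (10*t+10) := by
        have := h; rw [show 10*(t+1) = 10*t+10 by ring] at this; exact this
      rw [this]
    simp only [stateN, ih h', hsl]

section Transcript

variable {X Y : Type} (pr : AltProtocol X Y) (x : X) (y : Y)

theorem transcript_succ (ℓ : ℕ) :
    pr.transcript x y (ℓ+1) = pr.transcript x y ℓ ++
      [if (pr.transcript x y ℓ).length % 2 = 0
        then pr.nextA x (pr.transcript x y ℓ) else pr.nextB y (pr.transcript x y ℓ)] := rfl

theorem transcript_length (ℓ : ℕ) : (pr.transcript x y ℓ).length = ℓ := by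
  induction ℓ with
  | zero => rfl
  | succ ℓ ih => rw [transcript_succ]; simp [ih]

theorem transcript_take {a ℓ : ℕ} (h : a ≤ ℓ) :
    (pr.transcript x y ℓ).take a = pr.transcript x y a := by
  induction ℓ with
  | zero => simp at h; subst h; rfl
  | succ ℓ ih =>
    rcases Nat.lt_or_ge a (ℓ+1) with h' | h'
    · rw [transcript_succ, List.take_append_of_le_length]
      · exact ih (by omega)
      · rw [transcript_length]; omega
    · have : a = ℓ+1 := by omega
      subst this
      rw [List.take_of_length_le (by rw [transcript_length])]

/-- The key update lemma: updating prefix `transcript r` with a (partially erased)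
block carrying the codeword of the sender's state `transcript s`. -/
theorem upd_main (side : Bool) (f : List Bool → Bool)
    (Hf : ∀ ℓ, decide (ℓ % 2 = 0) = side →
      pr.transcript x y (ℓ+1) = pr.transcript x y ℓ ++ [f (pr.transcript x y ℓ)])
    (r s : ℕ)
    (hr_par : decide (r % 2 = 0) ≠ side)
    (w : List (Option Bool))
    (hw : ∀ j : Fin 10, w.getD j.val none = none ∨
        w.getD j.val none = some (code (symOf (pr.transcript x y s)) j)) :
    (r = s+1 → updP side f (pr.transcript x y r) w = pr.transcript x y r)
    ∧ (s = r+1 → updP side f (pr.transcript x y r) w = pr.transcript x y r ∨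
        updP side f (pr.transcript x y r) w = pr.transcript x y (r+2))
    ∧ (s = r+1 →
        (Finset.univ.filter (fun j : Fin 10 => w.getD j.val none = none)).card ≤ 5 →
        updP side f (pr.transcript x y r) w = pr.transcript x y (r+2)) := by
  have hcons : consistent (symOf (pr.transcript x y s)) w := by
    intro j b hj
    rcases hw j with h | h
    · rw [hj] at h; exact absurd h (by simp)
    · rw [hj] at h
      exact Option.some_injective _ h
  -- value facts about the symbol
  set T := pr.transcript x y s with hT
  have hTlen : T.length = s := transcript_length pr x y s
  have hval : (symOf T).val = (s % 3) * 2 + (if T.getLastD false then 1 else 0) := by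
    simp [symOf, encS, hTlen]
  have hdiv : (symOf T).val / 2 = s % 3 := by rw [hval]; split <;> omega
  have hmod : decide ((symOf T).val % 2 = 1) = T.getLastD false := by
    rw [hval]
    cases h : T.getLastD false <;> simp <;> omega
  -- advance step, common to claims 2 and 3
  have hadv : s = r+1 →
      stepP side f (pr.transcript x y r ++ [T.getLastD false]) = pr.transcript x y (r+2) := by
    intro hsr
    have hTr : T = pr.transcript x y r ++
        [if (pr.transcript x y r).length % 2 = 0
          then pr.nextA x (pr.transcript x y r) else pr.nextB y (pr.transcript x y r)] := by
      rw [hT, hsr]; exact transcript_succ pr x y r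
    have hlast : pr.transcript x y r ++ [T.getLastD false] = pr.transcript x y (r+1) := by
      rw [hTr]; simp [transcript_succ]
    rw [hlast]
    have hparr1 : decide ((r+1) % 2 = 0) = side := by
      cases side <;> simp_all <;> omega
    rw [stepP, if_pos (by rw [transcript_length]; exact hparr1)]
    exact (Hf (r+1) hparr1).symm
  refine ⟨?_, ?_, ?_⟩
  · intro hrs
    unfold updP
    cases hdec : decode w with
    | none => rfl
    | some u =>
      have := decode_safe hcons hdec
      subst this
      dsimp only
      have hcond : ¬((symOf T).val / 2 = ((pr.transcript x y r).length + 1) % 3) := by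
        rw [hdiv, transcript_length]; omega
      rw [if_neg hcond]
  · intro hsr
    unfold updP
    cases hdec : decode w with
    | none => exact Or.inl rfl
    | some u =>
      have := decode_safe hcons hdec
      subst this
      dsimp only
      have hcond : (symOf T).val / 2 = ((pr.transcript x y r).length + 1) % 3 := by
        rw [hdiv, transcript_length]; omega
      rw [if_pos hcond, hmod]
      exact Or.inr (hadv hsr)
  · intro hsr hcard
    unfold updP
    rw [decode_complete hw hcard]
    dsimp only
    have hcond : (symOf T).val / 2 = ((pr.transcript x y r).length + 1) % 3 := by
      rw [hdiv, transcript_length]; omega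
    rw [if_pos hcond, hmod]
    exact hadv hsr

end Transcript


section Views

variable {Γ X Y O : Type} {N : ℕ} (P : ErasureProtocol Γ X Y O N) (x : X) (y : Y)
  (E : Finset (Fin N))

theorem views_length (i : ℕ) :
    (P.views x y E i).1.length = min i N ∧ (P.views x y E i).2.length = min i N := by
  induction i with
  | zero => simp [ErasureProtocol.views]
  | succ i ih =>
    rw [ErasureProtocol.views]
    by_cases h : i < N
    · rw [dif_pos h]
      cases h2 : P.ord ⟨i, h⟩ <;> simp [h2, ih.1, ih.2] <;> omega
    · rw [dif_neg h]
      refine ⟨ih.1.trans ?_, ih.2.trans ?_⟩ <;> omega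

theorem views_prefix_succ (i : ℕ) :
    (P.views x y E i).1 <+: (P.views x y E (i+1)).1 ∧
    (P.views x y E i).2 <+: (P.views x y E (i+1)).2 := by
  rw [ErasureProtocol.views]
  by_cases h : i < N
  · rw [dif_pos h]
    cases h2 : P.ord ⟨i, h⟩ <;> simp [h2]
  · rw [dif_neg h]; exact ⟨List.prefix_rfl, List.prefix_rfl⟩

theorem views_prefix {i j : ℕ} (hij : i ≤ j) :
    (P.views x y E i).1 <+: (P.views x y E j).1 ∧
    (P.views x y E i).2 <+: (P.views x y E j).2 := by
  induction j with
  | zero => simp at hij; subst hij; exact ⟨List.prefix_rfl, List.prefix_rfl⟩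
  | succ j ih =>
    rcases Nat.lt_or_ge i (j+1) with h' | h'
    · have := ih (by omega)
      exact ⟨this.1.trans (views_prefix_succ P x y E j).1,
        this.2.trans (views_prefix_succ P x y E j).2⟩
    · have : i = j+1 := by omega
      subst this; exact ⟨List.prefix_rfl, List.prefix_rfl⟩

theorem views_take {i j : ℕ} (hij : i ≤ j) (hiN : i ≤ N) :
    (P.views x y E j).1.take i = (P.views x y E i).1 ∧
    (P.views x y E j).2.take i = (P.views x y E i).2 := by
  obtain ⟨h1, h2⟩ := views_prefix P x y E hij
  obtain ⟨l1, hl1⟩ := h1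
  obtain ⟨l2, hl2⟩ := h2
  obtain ⟨hlen1, hlen2⟩ := views_length P x y E i
  constructor
  · rw [← hl1, List.take_append_of_le_length (by omega), List.take_of_length_le (by omega)]
  · rw [← hl2, List.take_append_of_le_length (by omega), List.take_of_length_le (by omega)]

end Views

theorem slice_eq (v : List (Option Bool)) (a : ℕ) :
    (v.drop a).take 10 = (v.take (a+10)).drop a := by
  rw [List.drop_take]; congr 1; omega

theorem getD_map_range (g : ℕ → Option Bool) {k j : ℕ} (h : j < k) :
    ((List.range k).map g).getD j none = g j := by
  rw [List.getD_eq_getElem?_getD]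
  simp [List.getElem?_map, List.getElem?_range, h]

section ViewsSucc

variable {Γ X Y O : Type} {N : ℕ} (P : ErasureProtocol Γ X Y O N) (x : X) (y : Y)
  (E : Finset (Fin N))

theorem views_succ_A (i : ℕ) (h : i < N) (ho : P.ord ⟨i, h⟩ = true) :
    P.views x y E (i+1) =
      ((P.views x y E i).1 ++ [some (P.nextA x (P.views x y E i).1)],
       (P.views x y E i).2 ++ [if (⟨i, h⟩ : Fin N) ∈ E then none
         else some (P.nextA x (P.views x y E i).1)]) := by
  rw [ErasureProtocol.views]
  simp only [dif_pos h, ho, if_true]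

theorem views_succ_B (i : ℕ) (h : i < N) (ho : P.ord ⟨i, h⟩ = false) :
    P.views x y E (i+1) =
      ((P.views x y E i).1 ++ [if (⟨i, h⟩ : Fin N) ∈ E then none
         else some (P.nextB y (P.views x y E i).2)],
       (P.views x y E i).2 ++ [some (P.nextB y (P.views x y E i).2)]) := by
  rw [ErasureProtocol.views]
  simp only [dif_pos h, ho, if_false, Bool.false_eq_true]

end ViewsSucc

section Protocol

variable {X Y : Type} (pr : AltProtocol X Y) (n m : ℕ)

noncomputable def mkProt : ErasureProtocol Bool X Y (List Bool) (10*m) where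
  ord i := decide ((i.val / 10) % 2 = 0)
  nextA x v := code (symOf (stateN true (fun T => pr.nextA x T) v (v.length / 10)))
    ⟨v.length % 10, Nat.mod_lt _ (by norm_num)⟩
  nextB y v := code (symOf (stateN false (fun T => pr.nextB y T) v (v.length / 10)))
    ⟨v.length % 10, Nat.mod_lt _ (by norm_num)⟩
  outA x v := (stateN true (fun T => pr.nextA x T) v (v.length / 10)).take n
  outB y v := (stateN false (fun T => pr.nextB y T) v (v.length / 10)).take n

variable (x : X) (y : Y) (E : Finset (Fin (10*m)))

noncomputable def Ast (t : ℕ) : List Bool :=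
  stateN true (fun T => pr.nextA x T) ((mkProt pr n m).views x y E (10*m)).1 t

noncomputable def Bst (t : ℕ) : List Bool :=
  stateN false (fun T => pr.nextB y T) ((mkProt pr n m).views x y E (10*m)).2 t

theorem stateA_at {t i : ℕ} (h1 : 10*t ≤ i) (h2 : i ≤ 10*m) :
    stateN true (fun T => pr.nextA x T) ((mkProt pr n m).views x y E i).1 t
      = Ast pr n m x y E t := by
  apply stateN_congr
  rw [(views_take (mkProt pr n m) x y E h1 (by omega)).1,
      (views_take (mkProt pr n m) x y E (show 10*t ≤ 10*m by omega) (by omega)).1]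

theorem stateB_at {t i : ℕ} (h1 : 10*t ≤ i) (h2 : i ≤ 10*m) :
    stateN false (fun T => pr.nextB y T) ((mkProt pr n m).views x y E i).2 t
      = Bst pr n m x y E t := by
  apply stateN_congr
  rw [(views_take (mkProt pr n m) x y E h1 (by omega)).2,
      (views_take (mkProt pr n m) x y E (show 10*t ≤ 10*m by omega) (by omega)).2]

/-- The window of symbols Bob receives during an Alice block. -/
noncomputable def gA (t : ℕ) (r : ℕ) : Option Bool :=
  if h : 10*t+r < 10*m ∧ r < 10 then
    (if (⟨10*t+r, h.1⟩ : Fin (10*m)) ∈ E then none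
     else some (code (symOf (Ast pr n m x y E t)) ⟨r, h.2⟩))
  else none

/-- The window of symbols Alice receives during a Bob block. -/
noncomputable def gB (t : ℕ) (r : ℕ) : Option Bool :=
  if h : 10*t+r < 10*m ∧ r < 10 then
    (if (⟨10*t+r, h.1⟩ : Fin (10*m)) ∈ E then none
     else some (code (symOf (Bst pr n m x y E t)) ⟨r, h.2⟩))
  else none

theorem unrollA (t : ℕ) (ht : t < m) (hpar : t % 2 = 0) :
    ∀ j, j ≤ 10 →
      ((mkProt pr n m).views x y E (10*t+j)).2 =
        ((mkProt pr n m).views x y E (10*t)).2 ++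
          (List.range j).map (gA pr n m x y E t) := by
  intro j hj
  induction j with
  | zero => simp
  | succ j ihj =>
    have hj' : j ≤ 10 := by omega
    have hij : 10*t+j < 10*m := by omega
    have hord : (mkProt pr n m).ord ⟨10*t+j, hij⟩ = true := by
      show decide (((10*t+j) / 10) % 2 = 0) = true
      have hd : (10*t+j)/10 = t := by omega
      rw [hd]
      simp [hpar]
    have hlen : ((mkProt pr n m).views x y E (10*t+j)).1.length = 10*t+j := by
      rw [(views_length (mkProt pr n m) x y E (10*t+j)).1]; omega
    have hs : (mkProt pr n m).nextA x ((mkProt pr n m).views x y E (10*t+j)).1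
        = code (symOf (Ast pr n m x y E t)) ⟨j, by omega⟩ := by
      show code (symOf (stateN true (fun T => pr.nextA x T)
          ((mkProt pr n m).views x y E (10*t+j)).1
          (((mkProt pr n m).views x y E (10*t+j)).1.length / 10)))
        ⟨((mkProt pr n m).views x y E (10*t+j)).1.length % 10, _⟩ = _
      have hd : ((mkProt pr n m).views x y E (10*t+j)).1.length / 10 = t := by
        rw [hlen]; omega
      have hm : ((mkProt pr n m).views x y E (10*t+j)).1.length % 10 = j := by
        rw [hlen]; omega
      congr 1
      · rw [hd, stateA_at pr n m x y E (by omega) (by omega)]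
      · exact Fin.ext hm
    rw [show 10*t+(j+1) = (10*t+j)+1 by ring,
        views_succ_A (mkProt pr n m) x y E (10*t+j) hij hord]
    dsimp only
    rw [ihj hj', List.range_succ, List.map_append, List.append_assoc]
    congr 1
    have hg : gA pr n m x y E t j = if (⟨10*t+j, hij⟩ : Fin (10*m)) ∈ E then none
        else some (code (symOf (Ast pr n m x y E t)) ⟨j, by omega⟩) := by
      unfold gA; rw [dif_pos ⟨hij, by omega⟩]
    simp only [List.map_cons, List.map_nil, hg, hs]

theorem unrollB (t : ℕ) (ht : t < m) (hpar : t % 2 = 1) :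
    ∀ j, j ≤ 10 →
      ((mkProt pr n m).views x y E (10*t+j)).1 =
        ((mkProt pr n m).views x y E (10*t)).1 ++
          (List.range j).map (gB pr n m x y E t) := by
  intro j hj
  induction j with
  | zero => simp
  | succ j ihj =>
    have hj' : j ≤ 10 := by omega
    have hij : 10*t+j < 10*m := by omega
    have hord : (mkProt pr n m).ord ⟨10*t+j, hij⟩ = false := by
      show decide (((10*t+j) / 10) % 2 = 0) = false
      have hd : (10*t+j)/10 = t := by omega
      rw [hd]
      simp [hpar]
    have hlen : ((mkProt pr n m).views x y E (10*t+j)).2.length = 10*t+j := by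
      rw [(views_length (mkProt pr n m) x y E (10*t+j)).2]; omega
    have hs : (mkProt pr n m).nextB y ((mkProt pr n m).views x y E (10*t+j)).2
        = code (symOf (Bst pr n m x y E t)) ⟨j, by omega⟩ := by
      show code (symOf (stateN false (fun T => pr.nextB y T)
          ((mkProt pr n m).views x y E (10*t+j)).2
          (((mkProt pr n m).views x y E (10*t+j)).2.length / 10)))
        ⟨((mkProt pr n m).views x y E (10*t+j)).2.length % 10, _⟩ = _
      have hd : ((mkProt pr n m).views x y E (10*t+j)).2.length / 10 = t := by
        rw [hlen]; omega
      have hm : ((mkProt pr n m).views x y E (10*t+j)).2.length % 10 = j := by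
        rw [hlen]; omega
      congr 1
      · rw [hd, stateB_at pr n m x y E (by omega) (by omega)]
      · exact Fin.ext hm
    rw [show 10*t+(j+1) = (10*t+j)+1 by ring,
        views_succ_B (mkProt pr n m) x y E (10*t+j) hij hord]
    dsimp only
    rw [ihj hj', List.range_succ, List.map_append, List.append_assoc]
    congr 1
    have hg : gB pr n m x y E t j = if (⟨10*t+j, hij⟩ : Fin (10*m)) ∈ E then none
        else some (code (symOf (Bst pr n m x y E t)) ⟨j, by omega⟩) := by
      unfold gB; rw [dif_pos ⟨hij, by omega⟩]
    simp only [List.map_cons, List.map_nil, hg, hs]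


theorem windowA (t : ℕ) (ht : t < m) (hpar : t % 2 = 0) :
    ((((mkProt pr n m).views x y E (10*m)).2).drop (10*t)).take 10 =
      (List.range 10).map (gA pr n m x y E t) := by
  have h10 : 10*t+10 ≤ 10*m := by omega
  rw [slice_eq, (views_take (mkProt pr n m) x y E h10 h10).2,
      show 10*t+10 = 10*t+10 from rfl]
  have hu := unrollA pr n m x y E t ht hpar 10 le_rfl
  rw [show 10*t+10 = 10*t+10 from rfl] at hu
  rw [hu]
  have hl : ((mkProt pr n m).views x y E (10*t)).2.length = 10*t := by
    rw [(views_length (mkProt pr n m) x y E (10*t)).2]; omega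
  rw [List.drop_left' hl]

theorem windowB (t : ℕ) (ht : t < m) (hpar : t % 2 = 1) :
    ((((mkProt pr n m).views x y E (10*m)).1).drop (10*t)).take 10 =
      (List.range 10).map (gB pr n m x y E t) := by
  have h10 : 10*t+10 ≤ 10*m := by omega
  rw [slice_eq, (views_take (mkProt pr n m) x y E h10 h10).1]
  have hu := unrollB pr n m x y E t ht hpar 10 le_rfl
  rw [hu]
  have hl : ((mkProt pr n m).views x y E (10*t)).1.length = 10*t := by
    rw [(views_length (mkProt pr n m) x y E (10*t)).1]; omega
  rw [List.drop_left' hl]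

theorem Ast_succ_even (t : ℕ) (hpar : t % 2 = 0) :
    Ast pr n m x y E (t+1) = Ast pr n m x y E t := by
  unfold Ast
  rw [stateN]
  simp [hpar]

theorem Bst_succ_odd (t : ℕ) (hpar : t % 2 = 1) :
    Bst pr n m x y E (t+1) = Bst pr n m x y E t := by
  unfold Bst
  rw [stateN]
  simp [hpar]

theorem Bst_succ_even (t : ℕ) (ht : t < m) (hpar : t % 2 = 0) :
    Bst pr n m x y E (t+1) = updP false (fun T => pr.nextB y T) (Bst pr n m x y E t)
      ((List.range 10).map (gA pr n m x y E t)) := by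
  unfold Bst
  rw [stateN]
  rw [if_neg (by simp [hpar]), windowA pr n m x y E t ht hpar]

theorem Ast_succ_odd (t : ℕ) (ht : t < m) (hpar : t % 2 = 1) :
    Ast pr n m x y E (t+1) = updP true (fun T => pr.nextA x T) (Ast pr n m x y E t)
      ((List.range 10).map (gB pr n m x y E t)) := by
  unfold Ast
  rw [stateN]
  rw [if_neg (by simp [hpar]), windowB pr n m x y E t ht hpar]

theorem hwA (t : ℕ) : ∀ j : Fin 10,
    ((List.range 10).map (gA pr n m x y E t)).getD j.val none = none ∨
    ((List.range 10).map (gA pr n m x y E t)).getD j.val none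
      = some (code (symOf (Ast pr n m x y E t)) j) := by
  intro j
  rw [getD_map_range _ j.isLt]
  unfold gA
  by_cases h : 10*t+j.val < 10*m ∧ j.val < 10
  · rw [dif_pos h]
    by_cases hE : (⟨10*t+j.val, h.1⟩ : Fin (10*m)) ∈ E
    · rw [if_pos hE]; exact Or.inl rfl
    · rw [if_neg hE]
      exact Or.inr rfl
  · rw [dif_neg h]; exact Or.inl rfl

theorem hwB (t : ℕ) : ∀ j : Fin 10,
    ((List.range 10).map (gB pr n m x y E t)).getD j.val none = none ∨
    ((List.range 10).map (gB pr n m x y E t)).getD j.val none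
      = some (code (symOf (Bst pr n m x y E t)) j) := by
  intro j
  rw [getD_map_range _ j.isLt]
  unfold gB
  by_cases h : 10*t+j.val < 10*m ∧ j.val < 10
  · rw [dif_pos h]
    by_cases hE : (⟨10*t+j.val, h.1⟩ : Fin (10*m)) ∈ E
    · rw [if_pos hE]; exact Or.inl rfl
    · rw [if_neg hE]
      exact Or.inr rfl
  · rw [dif_neg h]; exact Or.inl rfl

theorem cardA (t : ℕ) (ht : t < m) :
    (Finset.univ.filter (fun j : Fin 10 =>
      ((List.range 10).map (gA pr n m x y E t)).getD j.val none = none)).card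
    ≤ (E.filter (fun i => i.val/10 = t)).card := by
  apply Finset.card_le_card_of_injOn (fun j => (⟨10*t + j.val, by omega⟩ : Fin (10*m)))
  · intro j hj
    simp only [Finset.mem_coe, Finset.mem_filter, Finset.mem_univ, true_and] at hj ⊢
    rw [getD_map_range _ j.isLt] at hj
    unfold gA at hj
    rw [dif_pos ⟨by omega, j.isLt⟩] at hj
    constructor
    · by_cases hE : (⟨10*t+j.val, by omega⟩ : Fin (10*m)) ∈ E
      · exact hE
      · rw [if_neg hE] at hj; exact absurd hj (by simp)
    · show (10*t + j.val) / 10 = t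
      omega
  · intro j₁ _ j₂ _ h
    have : 10*t + j₁.val = 10*t + j₂.val := congrArg Fin.val h
    exact Fin.ext (by omega)

theorem cardB (t : ℕ) (ht : t < m) :
    (Finset.univ.filter (fun j : Fin 10 =>
      ((List.range 10).map (gB pr n m x y E t)).getD j.val none = none)).card
    ≤ (E.filter (fun i => i.val/10 = t)).card := by
  apply Finset.card_le_card_of_injOn (fun j => (⟨10*t + j.val, by omega⟩ : Fin (10*m)))
  · intro j hj
    simp only [Finset.mem_coe, Finset.mem_filter, Finset.mem_univ, true_and] at hj ⊢
    rw [getD_map_range _ j.isLt] at hj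
    unfold gB at hj
    rw [dif_pos ⟨by omega, j.isLt⟩] at hj
    constructor
    · by_cases hE : (⟨10*t+j.val, by omega⟩ : Fin (10*m)) ∈ E
      · exact hE
      · rw [if_neg hE] at hj; exact absurd hj (by simp)
    · show (10*t + j.val) / 10 = t
      omega
  · intro j₁ _ j₂ _ h
    have : 10*t + j₁.val = 10*t + j₂.val := congrArg Fin.val h
    exact Fin.ext (by omega)


theorem Ast_zero : Ast pr n m x y E 0 = pr.transcript x y 1 := by
  unfold Ast
  rw [stateN]
  simp [stepP, AltProtocol.transcript]

theorem Bst_zero : Bst pr n m x y E 0 = pr.transcript x y 0 := by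
  unfold Bst
  rw [stateN]
  simp [stepP, AltProtocol.transcript]

theorem main_inv (t : ℕ) (ht : t ≤ m) :
    ∃ a b : ℕ, Ast pr n m x y E t = pr.transcript x y a ∧
      Bst pr n m x y E t = pr.transcript x y b ∧
      a % 2 = 1 ∧ b % 2 = 0 ∧ (a = b+1 ∨ b = a+1) ∧
      6 + 3*t ≤ 3*(a+b)
        + (if (decide (t % 2 = 0) = decide (a = b+1)) then 3 else 0)
        + ∑ t' ∈ Finset.range t, min ((E.filter (fun i => i.val/10 = t')).card) 6 := by
  induction t with
  | zero =>
    refine ⟨1, 0, Ast_zero pr n m x y E, Bst_zero pr n m x y E, rfl, rfl, Or.inl rfl, ?_⟩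
    norm_num
  | succ t ih =>
    obtain ⟨a, b, hA, hB, hap, hbp, hab, hpot⟩ := ih (by omega)
    have htm : t < m := by omega
    have hsum : ∑ t' ∈ Finset.range (t+1), min ((E.filter (fun i => i.val/10 = t')).card) 6
        = (∑ t' ∈ Finset.range t, min ((E.filter (fun i => i.val/10 = t')).card) 6)
          + min ((E.filter (fun i => i.val/10 = t)).card) 6 :=
      Finset.sum_range_succ _ _
    by_cases hpar : t % 2 = 0
    · -- Alice is the sender of block t
      have hA' : Ast pr n m x y E (t+1) = pr.transcript x y a := by
        rw [Ast_succ_even pr n m x y E t hpar, hA]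
      have HfB : ∀ ℓ, decide (ℓ % 2 = 0) = false →
          pr.transcript x y (ℓ+1) = pr.transcript x y ℓ ++
            [(fun T => pr.nextB y T) (pr.transcript x y ℓ)] := by
        intro ℓ hℓ
        rw [transcript_succ, transcript_length]
        simp only [decide_eq_false_iff_not] at hℓ
        rw [if_neg hℓ]
      have hw := hwA pr n m x y E t
      rw [hA] at hw
      have hrp : decide (b % 2 = 0) ≠ false := by simp [hbp]
      have H := upd_main pr x y false (fun T => pr.nextB y T) HfB b a hrp
        ((List.range 10).map (gA pr n m x y E t)) hw
      have hBgen : Bst pr n m x y E (t+1) = updP false (fun T => pr.nextB y T)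
          (pr.transcript x y b) ((List.range 10).map (gA pr n m x y E t)) := by
        rw [Bst_succ_even pr n m x y E t htm hpar, hB]
      have hcardle := cardA pr n m x y E t htm
      have hbonus_old : (if (decide (t % 2 = 0) = decide (a = b+1)) then 3 else 0)
          = (if a = b+1 then 3 else 0) := by
        by_cases h : a = b+1 <;> simp [h, hpar]
      rw [hbonus_old] at hpot
      rcases hab with hab | hab
      · -- Alice is leader: Bob may advance
        rcases H.2.1 hab with h2 | h2
        · -- stall: at least 6 erasures in this block
          have hcard6 : 6 ≤ ((Finset.univ.filter (fun j : Fin 10 =>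
              ((List.range 10).map (gA pr n m x y E t)).getD j.val none = none))).card := by
            by_contra hc
            push_neg at hc
            have h3 := H.2.2 hab (by omega)
            rw [h2] at h3
            have h4 := congrArg List.length h3
            rw [transcript_length, transcript_length] at h4
            omega
          have he6 : 6 ≤ (E.filter (fun i => i.val/10 = t)).card :=
            le_trans hcard6 hcardle
          refine ⟨a, b, hA', by rw [hBgen, h2], hap, hbp, Or.inl hab, ?_⟩
          have hbn : (if (decide ((t+1) % 2 = 0) = decide (a = b+1)) then 3 else 0) = 0 := by
            have h1 : (t+1) % 2 = 1 := by omega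
            simp [h1, hab]
          rw [hbn, hsum]
          have hmin : min ((E.filter (fun i => i.val/10 = t)).card) 6 = 6 := by omega
          rw [hmin]
          simp only [hab, if_pos] at hpot
          omega
        · -- advance: Bob gains two transcript bits
          refine ⟨a, b+2, hA', by rw [hBgen, h2], hap, by omega, Or.inr (by omega), ?_⟩
          have hbn : (if (decide ((t+1) % 2 = 0) = decide (a = (b+2)+1)) then 3 else 0)
              = 3 := by
            have h1 : (t+1) % 2 = 1 := by omega
            have h2' : ¬ (a = b+3) := by omega
            simp [h1, h2']
          rw [hbn, hsum]
          simp only [hab, if_pos] at hpot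
          omega
      · -- Bob is leader: the block is stale, nothing changes
        have h2 := H.1 hab
        refine ⟨a, b, hA', by rw [hBgen, h2], hap, hbp, Or.inr hab, ?_⟩
        have hbn : (if (decide ((t+1) % 2 = 0) = decide (a = b+1)) then 3 else 0) = 3 := by
          have h1 : (t+1) % 2 = 1 := by omega
          have h2' : ¬ (a = b+1) := by omega
          simp [h1, h2']
        rw [hbn, hsum]
        have h2' : ¬ (a = b+1) := by omega
        rw [if_neg h2'] at hpot
        omega
    · -- Bob is the sender of block t
      have hpar1 : t % 2 = 1 := by omega
      have hB' : Bst pr n m x y E (t+1) = pr.transcript x y b := by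
        rw [Bst_succ_odd pr n m x y E t hpar1, hB]
      have HfA : ∀ ℓ, decide (ℓ % 2 = 0) = true →
          pr.transcript x y (ℓ+1) = pr.transcript x y ℓ ++
            [(fun T => pr.nextA x T) (pr.transcript x y ℓ)] := by
        intro ℓ hℓ
        rw [transcript_succ, transcript_length]
        simp only [decide_eq_true_eq] at hℓ
        rw [if_pos hℓ]
      have hw := hwB pr n m x y E t
      rw [hB] at hw
      have hrp : decide (a % 2 = 0) ≠ true := by simp [hap]
      have H := upd_main pr x y true (fun T => pr.nextA x T) HfA a b hrp
        ((List.range 10).map (gB pr n m x y E t)) hw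
      have hAgen : Ast pr n m x y E (t+1) = updP true (fun T => pr.nextA x T)
          (pr.transcript x y a) ((List.range 10).map (gB pr n m x y E t)) := by
        rw [Ast_succ_odd pr n m x y E t htm hpar1, hA]
      have hcardle := cardB pr n m x y E t htm
      have hbonus_old : (if (decide (t % 2 = 0) = decide (a = b+1)) then 3 else 0)
          = (if b = a+1 then 3 else 0) := by
        have hd : decide (t % 2 = 0) = false := by simp [hpar1]
        rw [hd]
        by_cases h : a = b + 1
        · have h' : ¬ b = a + 1 := by omega
          rw [if_neg h']
          simp [h]
        · have h' : b = a + 1 := hab.resolve_left h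
          rw [if_pos h']
          simp [h]
      rw [hbonus_old] at hpot
      rcases hab with hab | hab
      · -- Alice is leader: Bob's block is stale, nothing changes
        have h2 := H.1 hab
        refine ⟨a, b, by rw [hAgen, h2], hB', hap, hbp, Or.inl hab, ?_⟩
        have hbn : (if (decide ((t+1) % 2 = 0) = decide (a = b+1)) then 3 else 0) = 3 := by
          have h1 : (t+1) % 2 = 0 := by omega
          simp [h1, hab]
        rw [hbn, hsum]
        have h2' : ¬ (b = a+1) := by omega
        rw [if_neg h2'] at hpot
        omega
      · -- Bob is leader: Alice may advance
        rcases H.2.1 hab with h2 | h2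
        · -- stall: at least 6 erasures in this block
          have hcard6 : 6 ≤ ((Finset.univ.filter (fun j : Fin 10 =>
              ((List.range 10).map (gB pr n m x y E t)).getD j.val none = none))).card := by
            by_contra hc
            push_neg at hc
            have h3 := H.2.2 hab (by omega)
            rw [h2] at h3
            have h4 := congrArg List.length h3
            rw [transcript_length, transcript_length] at h4
            omega
          have he6 : 6 ≤ (E.filter (fun i => i.val/10 = t)).card :=
            le_trans hcard6 hcardle
          refine ⟨a, b, by rw [hAgen, h2], hB', hap, hbp, Or.inr hab, ?_⟩
          have hbn : (if (decide ((t+1) % 2 = 0) = decide (a = b+1)) then 3 else 0) = 0 := by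
            have h1 : (t+1) % 2 = 0 := by omega
            have h2' : ¬ (a = b+1) := by omega
            simp [h1, h2']
          rw [hbn, hsum]
          have hmin : min ((E.filter (fun i => i.val/10 = t)).card) 6 = 6 := by omega
          rw [hmin]
          rw [if_pos hab] at hpot
          omega
        · -- advance: Alice gains two transcript bits
          refine ⟨a+2, b, by rw [hAgen, h2], hB', by omega, hbp, Or.inl (by omega), ?_⟩
          have hbn : (if (decide ((t+1) % 2 = 0) = decide (a+2 = b+1)) then 3 else 0)
              = 3 := by
            have h1 : (t+1) % 2 = 0 := by omega
            have h2' : a+2 = b+1 := by omega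
            simp [h1, h2']
          rw [hbn, hsum]
          rw [if_pos hab] at hpot
          omega


theorem outA_final :
    (mkProt pr n m).outA x ((mkProt pr n m).views x y E (10*m)).1
      = (Ast pr n m x y E m).take n := by
  show (stateN true (fun T => pr.nextA x T) ((mkProt pr n m).views x y E (10*m)).1
      (((mkProt pr n m).views x y E (10*m)).1.length / 10)).take n = _
  have hl : ((mkProt pr n m).views x y E (10*m)).1.length = 10*m := by
    rw [(views_length (mkProt pr n m) x y E (10*m)).1]; omega
  rw [hl, Nat.mul_div_cancel_left m (by norm_num : (0:ℕ) < 10)]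
  rfl

theorem outB_final :
    (mkProt pr n m).outB y ((mkProt pr n m).views x y E (10*m)).2
      = (Bst pr n m x y E m).take n := by
  show (stateN false (fun T => pr.nextB y T) ((mkProt pr n m).views x y E (10*m)).2
      (((mkProt pr n m).views x y E (10*m)).2.length / 10)).take n = _
  have hl : ((mkProt pr n m).views x y E (10*m)).2.length = 10*m := by
    rw [(views_length (mkProt pr n m) x y E (10*m)).2]; omega
  rw [hl, Nat.mul_div_cancel_left m (by norm_num : (0:ℕ) < 10)]
  rfl

theorem sum_blocks : ∑ t ∈ Finset.range m, (E.filter (fun i => i.val/10 = t)).card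
    = E.card :=
  (Finset.card_eq_sum_card_fiberwise
    (fun i _ => Finset.mem_range.mpr (by have := i.isLt; omega))).symm

end Protocol




theorem binary_erasure_three_tenths' :
    ∃ c : ℝ, 0 < c ∧
      ∀ (X Y : Type) (pr : AltProtocol X Y) (n : ℕ) (ε : ℝ),
        0 < ε → ε < 3/10 →
        ∃ (N : ℕ) (P : ErasureProtocol Bool X Y (List Bool) N),
          (N : ℝ) ≤ c * n / ε ∧
          ∀ (x : X) (y : Y) (E : Finset (Fin N)),
            (E.card : ℝ) ≤ (3/10 - ε) * N →
            P.outA x (P.views x y E N).1 = pr.transcript x y n ∧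
            P.outB y (P.views x y E N).2 = pr.transcript x y n := by
  refine ⟨16, by norm_num, ?_⟩
  intro X Y pr n ε hε hε'
  rcases Nat.eq_zero_or_pos n with hn | hn
  · subst hn
    exact ⟨0, ⟨fun i => i.elim0, fun _ _ => true, fun _ _ => true,
      fun _ _ => [], fun _ _ => []⟩, by simp, fun x y E _ => ⟨rfl, rfl⟩⟩
  · set m := ⌈(3*(n:ℝ))/(5*ε)⌉₊ with hm
    have hε1 : ε ≤ 1 := by linarith
    have hn1 : (1:ℝ) ≤ (n:ℕ) := by exact_mod_cast hn
    have hpos : (0:ℝ) ≤ 3*(n:ℝ)/(5*ε) := by positivity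
    refine ⟨10*m, mkProt pr n m, ?_, ?_⟩
    · have hm1 : (m:ℝ) < 3*(n:ℝ)/(5*ε) + 1 := Nat.ceil_lt_add_one hpos
      have hm2 : (m:ℝ)*(5*ε) < 3*(n:ℝ) + 5*ε := by
        have h5 : (0:ℝ) < 5*ε := by linarith
        have := mul_lt_mul_of_pos_right hm1 h5
        rwa [add_mul, one_mul, div_mul_cancel₀ _ (ne_of_gt h5)] at this
      rw [le_div_iff₀ hε]
      push_cast
      nlinarith
    · intro x y E hE
      have hmlb : (3*(n:ℝ))/(5*ε) ≤ (m:ℝ) := Nat.le_ceil _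
      have h6n : (6:ℝ)*n ≤ 10*ε*m := by
        have h5 : (0:ℝ) < 10*ε := by linarith
        have := mul_le_mul_of_nonneg_right hmlb (le_of_lt h5)
        have heq : (3*(n:ℝ))/(5*ε)*(10*ε) = 6*n := by
          field_simp
          ring
        rw [heq] at this
        linarith
      have hEc : (E.card:ℝ) ≤ (3/10 - ε) * ((10*m : ℕ):ℝ) := hE
      have key : (E.card:ℝ) + 6*(n:ℝ) ≤ 3*(m:ℝ) := by
        push_cast at hEc
        nlinarith
      have hcard_nat : E.card + 6*n ≤ 3*m := by exact_mod_cast key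
      obtain ⟨a, b, hA, hB, hap, hbp, hab, hpot⟩ := main_inv pr n m x y E m le_rfl
      have hsum_le : ∑ t' ∈ Finset.range m,
          min ((E.filter (fun i => i.val/10 = t')).card) 6 ≤ E.card := by
        calc ∑ t' ∈ Finset.range m, min ((E.filter (fun i => i.val/10 = t')).card) 6
            ≤ ∑ t' ∈ Finset.range m, (E.filter (fun i => i.val/10 = t')).card :=
              Finset.sum_le_sum (fun t' _ => Nat.min_le_left _ _)
          _ = E.card := sum_blocks m E
      have hbon : (if (decide (m % 2 = 0) = decide (a = b+1)) then 3 else 0) ≤ 3 := by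
        split <;> omega
      have han : n ≤ a ∧ n ≤ b := by omega
      constructor
      · rw [outA_final pr n m x y E, hA, transcript_take pr x y han.1]
      · rw [outB_final pr n m x y E, hB, transcript_take pr x y han.2]

end BEaux

/-- For every ε with 0 < ε < 3/10 and every noiseless alternating binary
protocol π of length n, there is a deterministic protocol over a binary erasure channel
with a fixed order of speaking, of length N ≤ c·n/ε for an absolute constant c > 0,
such that for every input pair (x,y) and every erasure pattern E with
|E| ≤ (3/10 − ε)·N, both parties output the transcript π(x,y). -/
theorem binary_erasure_three_tenths :
    ∃ c : ℝ, 0 < c ∧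
      ∀ (X Y : Type) (pr : AltProtocol X Y) (n : ℕ) (ε : ℝ),
        0 < ε → ε < 3/10 →
        ∃ (N : ℕ) (P : ErasureProtocol Bool X Y (List Bool) N),
          (N : ℝ) ≤ c * n / ε ∧
          ∀ (x : X) (y : Y) (E : Finset (Fin N)),
            (E.card : ℝ) ≤ (3/10 - ε) * N →
            P.outA x (P.views x y E N).1 = pr.transcript x y n ∧
            P.outB y (P.views x y E N).2 = pr.transcript x y n :=
  BEaux.binary_erasure_three_tenths'
end
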